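/- arXiv:2206.04219 — 3 statements merged into one kernel-verified Lean document; each statement's English description precedes it below -/
import Mathlib

section
/- The solitaire orbit of the line L_n contains at least 3·n! − 3 patterns for n ≥ 2. Specifically, for each of the three corners of T_n, choosing one point from each of the n lattice lines of T_n parallel to the edge opposite that corner yields an element of the orbit of L_n, and the only patterns obtainable in this way from two different corners are the three edges of T_n. -/
open Set Relation

/-- Points of the plane lattice. -/
abbrev Pt : Type := ℤ × ℤ

/-- The triangle shape `T = {(0,1),(1,1),(1,0)}`. -/
def Tshape : Set Pt := {(0, 1), (1, 1), (1, 0)}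

/-- Translate of a set of points by a vector. -/
def transl (v : Pt) (S : Set Pt) : Set Pt := (fun p => v + p) '' S

/-- Translate of a finite set of points by a vector. -/
def transF (v : Pt) (S : Finset Pt) : Finset Pt := S.image (fun p => v + p)

/-- A set is filled if every translate of `T` containing at least two of its
points is contained in it. -/
def Filled (F : Set Pt) : Prop :=
  ∀ v : Pt, 2 ≤ (F ∩ transl v Tshape).ncard → transl v Tshape ⊆ F

/-- The fill closure `φ(P)`: smallest filled superset of `P`. -/
def fill (P : Set Pt) : Set Pt := ⋂₀ {F | P ⊆ F ∧ Filled F}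

/-- A single triangle solitaire move: if a translate `v + T` contains exactly two
points of `P`, replace one of them by the third point of `v + T`. -/
def Move (P Q : Finset Pt) : Prop :=
  ∃ v x y : Pt, x ∈ Tshape ∧ y ∈ Tshape ∧ x ≠ y ∧
    v + x ∈ P ∧ v + y ∉ P ∧
    ((P : Set Pt) ∩ transl v Tshape).ncard = 2 ∧
    (Q : Set Pt) = insert (v + y) ((P : Set Pt) \ {v + x})

/-- `Q` is in the solitaire orbit of `P`. -/
def InOrbit (P Q : Finset Pt) : Prop := Relation.ReflTransGen Move P Q

/-- The discrete triangle `T_n = {(a,b) ∈ {0,…,n−1}² : a + b ≥ n − 1}`. -/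
def triangle (n : ℕ) : Set Pt :=
  {p | 0 ≤ p.1 ∧ p.1 < (n : ℤ) ∧ 0 ≤ p.2 ∧ p.2 < (n : ℤ) ∧ (n : ℤ) - 1 ≤ p.1 + p.2}

/-- Neighbourhood of a point: the other points sharing a translate of `T` with it. -/
def nbr (x : Pt) : Set Pt :=
  {y | y ≠ x ∧ ∃ v : Pt, x ∈ transl v Tshape ∧ y ∈ transl v Tshape}

/-- Neighbourhood of a set. -/
def nbrSet (A : Set Pt) : Set Pt := ⋃ a ∈ A, nbr a

/-- Two sets touch if one meets the neighbourhood of the other. -/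
def Touch (A B : Set Pt) : Prop := (A ∩ nbrSet B).Nonempty ∨ (B ∩ nbrSet A).Nonempty

/-- `(r, k, v)` is a decomposition of `φ(P)` into pairwise non-touching
translated triangles `vᵢ + T_{kᵢ}`. -/
def IsDecomp (P : Finset Pt) (r : ℕ) (k : Fin r → ℕ) (v : Fin r → Pt) : Prop :=
  (fill (P : Set Pt) = ⋃ i, transl (v i) (triangle (k i))) ∧
  (∀ i, 1 ≤ k i) ∧
  (∀ i j, i ≠ j → ¬ Touch (transl (v i) (triangle (k i))) (transl (v j) (triangle (k j))))

/-- The horizontal line `L_n = {(a, n−1) : 0 ≤ a ≤ n−1}` (top edge of `T_n`). -/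
def lineF (n : ℕ) : Finset Pt :=
  (Finset.range n).image (fun a : ℕ => (((a : ℤ), (n : ℤ) - 1) : Pt))

/-- The vertical edge `{(n−1, b) : 0 ≤ b ≤ n−1}` of `T_n`. -/
def vlineF (n : ℕ) : Finset Pt :=
  (Finset.range n).image (fun b : ℕ => ((((n : ℤ) - 1), (b : ℤ)) : Pt))

/-- The diagonal edge `{(a, n−1−a) : 0 ≤ a ≤ n−1}` of `T_n`. -/
def dlineF (n : ℕ) : Finset Pt :=
  (Finset.range n).image (fun a : ℕ => (((a : ℤ), (n : ℤ) - 1 - (a : ℤ)) : Pt))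

/-- The points of `T_n` below the top line, listed row `n−2` down to row `0`,
each row from right to left. -/
def belowPts (n : ℕ) : List Pt :=
  (List.range (n - 1)).flatMap (fun i =>
    (List.range (n - 1 - i)).map (fun t =>
      (((n : ℤ) - 1 - (t : ℤ), (n : ℤ) - 2 - (i : ℤ)) : Pt)))

/-- The canonical pattern `P_{n,k}`: the line `L_n` together with the first `k`
points of `T_n \ L_n` in the order: row `n−2` right to left, then row `n−3`, etc. -/
def PnkF (n k : ℕ) : Finset Pt := lineF n ∪ ((belowPts n).take k).toFinset

/-- A TEP family on the triangle shape, with cells ordered `(0,1), (1,1), (1,0)`: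
any two of the three symbols determine the third uniquely. -/
def IsTEP {A : Type} (R : Set (A × A × A)) : Prop :=
  (∀ a b : A, ∃! c : A, (a, b, c) ∈ R) ∧
  (∀ a c : A, ∃! b : A, (a, b, c) ∈ R) ∧
  (∀ b c : A, ∃! a : A, (a, b, c) ∈ R)

/-- A colouring is valid on `T_n` if every translate of `T` inside `T_n`
carries a pattern of `R`. -/
def ValidOn {A : Type} (R : Set (A × A × A)) (n : ℕ) (x : Pt → A) : Prop :=
  ∀ v : Pt, transl v Tshape ⊆ triangle n →
    (x (v + (0, 1)), x (v + (1, 1)), x (v + (1, 0))) ∈ R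

/-- One completion step: a translate of `T` inside `T_n` has exactly two
coloured cells; colour the third using the TEP rule `R`. States are pairs
(set of coloured cells, colouring). -/
def TStep {A : Type} (R : Set (A × A × A)) (n : ℕ)
    (s t : Set Pt × (Pt → A)) : Prop :=
  ∃ v : Pt, transl v Tshape ⊆ triangle n ∧
    ∃ c ∈ transl v Tshape, c ∉ s.1 ∧ transl v Tshape \ {c} ⊆ s.1 ∧
      t.1 = insert c s.1 ∧ (∀ p : Pt, p ≠ c → t.2 p = s.2 p) ∧
      (t.2 (v + (0, 1)), t.2 (v + (1, 1)), t.2 (v + (1, 0))) ∈ R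

/-- `P ⊆ T_n` is a basis: for every colouring of `P`, every maximal run of the
iterative completion process covers `T_n` and produces a valid pattern. -/
def IsBasis {A : Type} (R : Set (A × A × A)) (n : ℕ) (P : Finset Pt) : Prop :=
  (P : Set Pt) ⊆ triangle n ∧
  ∀ q : Pt → A, ∀ s : Set Pt × (Pt → A),
    Relation.ReflTransGen (TStep R n) ((P : Set Pt), q) s →
    (∀ t, ¬ TStep R n s t) →
    triangle n ⊆ s.1 ∧ ValidOn R n s.2
/-! ### Auxiliary development -/

lemma mem_translT {v p : Pt} :
    p ∈ transl v Tshape ↔ p = v + (0, 1) ∨ p = v + (1, 1) ∨ p = v + (1, 0) := by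
  constructor
  · rintro ⟨q, hq, rfl⟩
    rcases hq with rfl | rfl | rfl <;> tauto
  · rintro (rfl | rfl | rfl)
    exacts [⟨(0,1), by simp [Tshape], rfl⟩, ⟨(1,1), by simp [Tshape], rfl⟩,
      ⟨(1,0), by simp [Tshape], rfl⟩]

lemma translT_eq (v : Pt) :
    transl v Tshape = {v + (0, 1), v + (1, 1), v + (1, 0)} := by
  ext p; simp [mem_translT]

lemma mem_translT' {v p : Pt} :
    p ∈ transl v Tshape ↔ (p.1 = v.1 ∧ p.2 = v.2 + 1) ∨ (p.1 = v.1 + 1 ∧ p.2 = v.2 + 1) ∨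
      (p.1 = v.1 + 1 ∧ p.2 = v.2) := by
  rw [mem_translT]
  rcases v with ⟨v1, v2⟩; rcases p with ⟨p1, p2⟩
  simp [Prod.ext_iff]

lemma transl_transl (u v : Pt) (S : Set Pt) : transl u (transl v S) = transl (u + v) S := by
  simp only [transl, Set.image_image, add_assoc]
lemma mem_translT_of_mem {v x : Pt} (hx : x ∈ Tshape) : v + x ∈ transl v Tshape :=
  ⟨x, hx, rfl⟩

lemma move_symm : Symmetric Move := by
  rintro P Q ⟨v, x, y, hx, hy, hxy, hvxP, hvyP, hcard, hQ⟩
  have hvxT : v + x ∈ transl v Tshape := mem_translT_of_mem hx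
  have hvyT : v + y ∈ transl v Tshape := mem_translT_of_mem hy
  have hne : v + x ≠ v + y := fun h => hxy (add_left_cancel h)
  obtain ⟨a, b, hab, habs⟩ := Set.ncard_eq_two.mp hcard
  have hvxab : v + x ∈ ({a, b} : Set Pt) := habs ▸ ⟨hvxP, hvxT⟩
  obtain ⟨c, hcb, habs'⟩ : ∃ c, c ≠ v + x ∧ (P : Set Pt) ∩ transl v Tshape = {v + x, c} := by
    rcases hvxab with rfl | rfl
    · exact ⟨b, Ne.symm hab, habs⟩
    · exact ⟨a, hab, by rw [habs, Set.pair_comm]⟩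
  have hcP : c ∈ (P : Set Pt) ∧ c ∈ transl v Tshape := by
    have : c ∈ (P : Set Pt) ∩ transl v Tshape := habs' ▸ (by simp)
    exact this
  have hyc : v + y ≠ c := fun h => hvyP (by rw [h]; exact_mod_cast hcP.1)
  refine ⟨v, y, x, hy, hx, hxy.symm, ?_, ?_, ?_, ?_⟩
  · have : v + y ∈ (Q : Set Pt) := hQ ▸ Set.mem_insert _ _
    exact_mod_cast this
  · intro hmem
    have : v + x ∈ (Q : Set Pt) := by exact_mod_cast hmem
    rw [hQ] at this
    rcases this with h | h
    · exact hne h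
    · exact h.2 rfl
  · have hQvT : (Q : Set Pt) ∩ transl v Tshape = {v + y, c} := by
      rw [hQ, Set.insert_inter_of_mem hvyT]
      have h1 : ((P : Set Pt) \ {v + x}) ∩ transl v Tshape
          = ((P : Set Pt) ∩ transl v Tshape) \ {v + x} := by
        ext p; simp only [Set.mem_inter_iff, Set.mem_diff, Set.mem_singleton_iff]; tauto
      rw [h1, habs']
      have h2 : ({v + x, c} : Set Pt) \ {v + x} = {c} := by
        ext p; simp only [Set.mem_diff, Set.mem_insert_iff, Set.mem_singleton_iff]
        constructor
        · rintro ⟨rfl | rfl, hp⟩ <;> tauto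
        · rintro rfl; exact ⟨Or.inr rfl, hcb⟩
      rw [h2]
    rw [hQvT]
    exact Set.ncard_pair hyc
  · rw [hQ, Set.insert_diff_of_mem _ (Set.mem_singleton _),
      Set.diff_singleton_eq_self (fun h => hvyP (by exact_mod_cast h.1)),
      Set.insert_diff_singleton, Set.insert_eq_self.mpr (by exact_mod_cast hvxP)]
lemma move_image {f : Pt → Pt} (hf : Function.Injective f)
    (hT : ∀ v : Pt, ∃ w : Pt, f '' transl v Tshape = transl w Tshape)
    {P Q : Finset Pt} (h : Move P Q) : Move (P.image f) (Q.image f) := by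
  obtain ⟨v, x, y, hx, hy, hxy, hvxP, hvyP, hcard, hQ⟩ := h
  obtain ⟨w, hw⟩ := hT v
  have hfx : f (v + x) ∈ transl w Tshape := hw ▸ ⟨v + x, mem_translT_of_mem hx, rfl⟩
  have hfy : f (v + y) ∈ transl w Tshape := hw ▸ ⟨v + y, mem_translT_of_mem hy, rfl⟩
  obtain ⟨x', hx', hfx0⟩ := hfx
  obtain ⟨y', hy', hfy0⟩ := hfy
  have hfx' : w + x' = f (v + x) := hfx0
  have hfy' : w + y' = f (v + y) := hfy0
  refine ⟨w, x', y', hx', hy', ?_, ?_, ?_, ?_, ?_⟩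
  · rintro rfl
    exact hxy (add_left_cancel (hf (hfx'.symm.trans hfy')))
  · rw [hfx']; exact Finset.mem_image_of_mem f hvxP
  · rw [hfy']
    intro hm
    obtain ⟨p, hp, hfp⟩ := Finset.mem_image.mp hm
    exact hvyP (hf hfp ▸ hp)
  · have h1 : ((P.image f : Finset Pt) : Set Pt) ∩ transl w Tshape
        = f '' ((P : Set Pt) ∩ transl v Tshape) := by
      rw [Set.image_inter hf, Finset.coe_image, hw]
    rw [h1, Set.ncard_image_of_injective _ hf, hcard]
  · have h2 : ((Q.image f : Finset Pt) : Set Pt) = f '' (Q : Set Pt) := Finset.coe_image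
    rw [h2, hQ, Set.image_insert_eq, ← hfy', Set.image_diff hf, Set.image_singleton, ← hfx',
      Finset.coe_image]

/-- Confined version of a move. -/
def MoveIn (S : Set Pt) (P Q : Finset Pt) : Prop := Move P Q ∧ ↑P ⊆ S ∧ ↑Q ⊆ S

lemma moveIn_mono {S S' : Set Pt} (hS : S ⊆ S') {P Q : Finset Pt} (h : MoveIn S P Q) :
    MoveIn S' P Q := ⟨h.1, h.2.1.trans hS, h.2.2.trans hS⟩

lemma moveIn_symm (S : Set Pt) : Symmetric (MoveIn S) := by
  rintro P Q ⟨h, h1, h2⟩; exact ⟨move_symm h, h2, h1⟩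

lemma rtg_moveIn_symm {S : Set Pt} {P Q : Finset Pt}
    (h : Relation.ReflTransGen (MoveIn S) P Q) : Relation.ReflTransGen (MoveIn S) Q P :=
  by haveI : Std.Symm (MoveIn S) := ⟨fun _ _ hab => moveIn_symm S hab⟩; exact Std.Symm.symm _ _ h

lemma moveIn_image {f : Pt → Pt} (hf : Function.Injective f)
    (hT : ∀ v : Pt, ∃ w : Pt, f '' transl v Tshape = transl w Tshape)
    {S : Set Pt} {P Q : Finset Pt} (h : MoveIn S P Q) :
    MoveIn (f '' S) (P.image f) (Q.image f) := by
  refine ⟨move_image hf hT h.1, ?_, ?_⟩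
  · rw [Finset.coe_image]; exact Set.image_mono h.2.1
  · rw [Finset.coe_image]; exact Set.image_mono h.2.2

/-- Adding an isolated far-away point preserves confined moves. -/
lemma moveIn_insert {S : Set Pt} {c : ℤ} (hS : S ⊆ {p : Pt | p.1 < c})
    {r : Pt} (hr : c ≤ r.1) {P Q : Finset Pt} (h : MoveIn S P Q) :
    MoveIn (insert r S) (insert r P) (insert r Q) := by
  obtain ⟨⟨v, x, y, hx, hy, hxy, hvxP, hvyP, hcard, hQ⟩, hPS, hQS⟩ := h
  -- r is not in the triangle translate used
  have hrT : r ∉ transl v Tshape := by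
    obtain ⟨a, b, hab, habs⟩ := Set.ncard_eq_two.mp hcard
    have ha : a ∈ (P : Set Pt) ∩ transl v Tshape := habs ▸ (by simp)
    have hb : b ∈ (P : Set Pt) ∩ transl v Tshape := habs ▸ (by simp)
    have hac : a.1 < c := hS (hPS ha.1)
    have hbc : b.1 < c := hS (hPS hb.1)
    have haT := mem_translT'.mp ha.2
    have hbT := mem_translT'.mp hb.2
    intro hrm
    have hrT' := mem_translT'.mp hrm
    have hab' : a ≠ b := hab
    have : a.1 = v.1 + 1 ∨ b.1 = v.1 + 1 := by
      rcases haT with h1 | h1 | h1 <;> rcases hbT with h2 | h2 | h2 <;>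
        first
          | (left; exact h1.1) | (right; exact h2.1)
          | (exact absurd (Prod.ext_iff.mpr ⟨h1.1.trans h2.1.symm, h1.2.trans h2.2.symm⟩) hab')
    have hv1 : v.1 + 1 < c := by rcases this with h' | h' <;> omega
    rcases hrT' with h' | h' | h' <;> omega
  have hrx : r ≠ v + x := fun h' => hrT (h' ▸ mem_translT_of_mem hx)
  have hry : r ≠ v + y := fun h' => hrT (h' ▸ mem_translT_of_mem hy)
  refine ⟨⟨v, x, y, hx, hy, hxy, Finset.mem_insert_of_mem hvxP, ?_, ?_, ?_⟩, ?_, ?_⟩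
  · intro hm
    rcases Finset.mem_insert.mp hm with h' | h'
    · exact hry h'.symm
    · exact hvyP h'
  · have : ((insert r P : Finset Pt) : Set Pt) ∩ transl v Tshape
        = (P : Set Pt) ∩ transl v Tshape := by
      rw [Finset.coe_insert, Set.insert_inter_of_notMem hrT]
    rw [this, hcard]
  · rw [Finset.coe_insert, Finset.coe_insert, hQ]
    rw [Set.insert_diff_of_notMem _ (by simpa using hrx)]
    exact (Set.insert_comm _ _ _)
  · rw [Finset.coe_insert]
    exact Set.insert_subset_insert hPS
  · rw [Finset.coe_insert]
    exact Set.insert_subset_insert hQS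
/-- The column transversal pattern with heights `h`. -/
def patt (n : ℕ) (h : ℕ → ℤ) : Finset Pt :=
  (Finset.range n).image (fun a : ℕ => (((a : ℤ), h a) : Pt))

/-- Valid height functions for column transversals of `T_n`. -/
def validH (n : ℕ) (h : ℕ → ℤ) : Prop :=
  ∀ a : ℕ, a < n → (n : ℤ) - 1 - a ≤ h a ∧ h a ≤ (n : ℤ) - 1

lemma mem_patt {n : ℕ} {h : ℕ → ℤ} {p : Pt} :
    p ∈ patt n h ↔ ∃ a : ℕ, a < n ∧ p = ((a : ℤ), h a) := by
  simp [patt, eq_comm]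

lemma patt_congr {n : ℕ} {h h' : ℕ → ℤ} (hh : ∀ a < n, h a = h' a) :
    patt n h = patt n h' := by
  unfold patt
  apply Finset.image_congr
  intro a ha
  simp [hh a (Finset.mem_range.mp ha)]

lemma patt_subset_triangle {n : ℕ} {h : ℕ → ℤ} (hv : validH n h) :
    ↑(patt n h) ⊆ triangle n := by
  intro p hp
  obtain ⟨a, ha, rfl⟩ := mem_patt.mp hp
  obtain ⟨h1, h2⟩ := hv a ha
  refine ⟨by simp, by simpa using ha, ?_, ?_, ?_⟩ <;> simp [triangle] <;> omega

lemma lineF_eq_patt (n : ℕ) : lineF n = patt n (fun _ => (n : ℤ) - 1) := rfl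

lemma mem_transF_patt {n : ℕ} {h : ℕ → ℤ} {p : Pt} :
    p ∈ transF (0, 1) (patt n h) ↔ ∃ a : ℕ, a < n ∧ p = ((a : ℤ), h a + 1) := by
  simp only [transF, Finset.mem_image, mem_patt]
  constructor
  · rintro ⟨q, ⟨a, ha, rfl⟩, rfl⟩
    exact ⟨a, ha, by simp [Prod.ext_iff]; try ring⟩
  · rintro ⟨a, ha, rfl⟩
    exact ⟨((a : ℤ), h a), ⟨a, ha, rfl⟩, by simp [Prod.ext_iff]; try ring⟩

lemma patt_succ (n : ℕ) (h : ℕ → ℤ) :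
    patt (n + 1) h = insert (((n : ℤ), h n) : Pt) (transF (0, 1) (patt n (fun a => h a - 1))) := by
  ext p
  simp only [mem_patt, Finset.mem_insert, mem_transF_patt]
  constructor
  · rintro ⟨a, ha, rfl⟩
    rcases Nat.lt_succ_iff_lt_or_eq.mp ha with ha' | rfl
    · exact Or.inr ⟨a, ha', by simp [Prod.ext_iff]⟩
    · exact Or.inl rfl
  · rintro (rfl | ⟨a, ha, rfl⟩)
    · exact ⟨n, n.lt_succ_self, rfl⟩
    · exact ⟨a, Nat.lt_succ_of_lt ha, by simp [Prod.ext_iff]⟩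

lemma transF_patt_subset {n : ℕ} {g : ℕ → ℤ} (hv : validH n g) :
    ↑(transF (0, 1) (patt n g)) ⊆ triangle (n + 1) := by
  intro p hp
  obtain ⟨a, ha, rfl⟩ := mem_transF_patt.mp (by exact_mod_cast hp)
  obtain ⟨h1, h2⟩ := hv a ha
  refine ⟨by simp, ?_, ?_, ?_, ?_⟩ <;> simp [triangle] <;> (try push_cast) <;> try omega

lemma stepDown (n : ℕ) (hn : 1 ≤ n) (g : ℕ → ℤ) (hg : validH n g) (y : ℤ)
    (h1 : 1 ≤ y) (h2 : y ≤ (n : ℤ)) (hcol : g (n - 1) = y - 1) :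
    MoveIn (triangle (n + 1)) (insert (((n : ℤ), y) : Pt) (transF (0, 1) (patt n g)))
      (insert (((n : ℤ), y - 1) : Pt) (transF (0, 1) (patt n g))) := by
  have hnm : (((n - 1 : ℕ) : ℤ)) = (n : ℤ) - 1 := by omega
  have hmemA : (((n : ℤ) - 1, y) : Pt) ∈ transF (0, 1) (patt n g) := by
    rw [mem_transF_patt]
    exact ⟨n - 1, by omega, by rw [hnm, hcol]; simp [Prod.ext_iff]; try ring⟩
  have hnotF : ∀ y' : ℤ, (((n : ℤ), y') : Pt) ∉ transF (0, 1) (patt n g) := by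
    intro y' hm
    obtain ⟨a, ha, hpa⟩ := mem_transF_patt.mp hm
    have : ((n : ℤ)) = (a : ℤ) := congrArg Prod.fst hpa
    omega
  have hPsub : ↑(insert (((n : ℤ), y) : Pt) (transF (0, 1) (patt n g))) ⊆ triangle (n + 1) := by
    rw [Finset.coe_insert]
    refine Set.insert_subset ?_ (transF_patt_subset hg)
    refine ⟨?_, ?_, ?_, ?_, ?_⟩ <;> simp [triangle] <;> (try push_cast) <;> try omega
  have hQsub : ↑(insert (((n : ℤ), y - 1) : Pt) (transF (0, 1) (patt n g))) ⊆ triangle (n + 1) := by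
    rw [Finset.coe_insert]
    refine Set.insert_subset ?_ (transF_patt_subset hg)
    refine ⟨?_, ?_, ?_, ?_, ?_⟩ <;> simp [triangle] <;> (try push_cast) <;> try omega
  refine ⟨⟨((n : ℤ) - 1, y - 1), (1, 1), (1, 0), by simp [Tshape], by simp [Tshape],
    by simp [Prod.ext_iff], ?_, ?_, ?_, ?_⟩, hPsub, hQsub⟩
  · have : (((n : ℤ) - 1, y - 1) : Pt) + (1, 1) = ((n : ℤ), y) := by
      simp [Prod.ext_iff]; try constructor <;> ring
    rw [this]
    exact Finset.mem_insert_self _ _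
  · have heq : (((n : ℤ) - 1, y - 1) : Pt) + (1, 0) = ((n : ℤ), y - 1) := by
      simp [Prod.ext_iff]; try ring
    rw [heq]
    intro hm
    rcases Finset.mem_insert.mp hm with h' | h'
    · have := congrArg Prod.snd h'
      simp at this; try omega
    · exact hnotF _ h'
  · have hset : (↑(insert (((n : ℤ), y) : Pt) (transF (0, 1) (patt n g))) : Set Pt) ∩
        transl ((n : ℤ) - 1, y - 1) Tshape = {(((n : ℤ) - 1, y) : Pt), ((n : ℤ), y)} := by
      ext p
      rw [Set.mem_inter_iff, mem_translT']
      simp only [Finset.coe_insert, Set.mem_insert_iff, Finset.mem_coe, Set.mem_singleton_iff]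
      constructor
      · rintro ⟨hp1, hp2⟩
        rcases hp1 with rfl | hp1
        · right; rfl
        · obtain ⟨a, ha, rfl⟩ := mem_transF_patt.mp hp1
          left
          simp only [Prod.ext_iff]
          rcases hp2 with ⟨e1, e2⟩ | ⟨e1, e2⟩ | ⟨e1, e2⟩ <;> simp at e1 e2 ⊢ <;> omega
      · rintro (rfl | rfl)
        · exact ⟨Or.inr hmemA, by simp; try omega⟩
        · exact ⟨Or.inl rfl, by simp; try omega⟩
    rw [hset]
    refine Set.ncard_pair ?_
    simp [Prod.ext_iff]; try omega
  · have heq1 : (((n : ℤ) - 1, y - 1) : Pt) + (1, 0) = ((n : ℤ), y - 1) := by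
      simp [Prod.ext_iff]; try ring
    have heq2 : (((n : ℤ) - 1, y - 1) : Pt) + (1, 1) = ((n : ℤ), y) := by
      simp [Prod.ext_iff]; try constructor <;> ring
    rw [heq1, heq2, Finset.coe_insert, Finset.coe_insert]
    rw [Set.insert_diff_of_mem _ (Set.mem_singleton _),
      Set.diff_singleton_eq_self (fun hc => hnotF y (by exact_mod_cast hc))]
lemma triangle_shift_subset (n : ℕ) :
    (fun p : Pt => ((0 : ℤ), (1 : ℤ)) + p) '' triangle n ⊆ triangle (n + 1) := by
  rintro p ⟨q, hq, rfl⟩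
  obtain ⟨h1, h2, h3, h4, h5⟩ := hq
  refine ⟨?_, ?_, ?_, ?_, ?_⟩ <;> simp [triangle] <;> push_cast <;> omega

lemma triangle_shift_halfplane (n : ℕ) :
    (fun p : Pt => ((0 : ℤ), (1 : ℤ)) + p) '' triangle n ⊆ {p : Pt | p.1 < (n : ℤ)} := by
  rintro p ⟨q, hq, rfl⟩
  show (((0 : ℤ), (1 : ℤ)) + q).1 < (n : ℤ)
  have : (((0 : ℤ), (1 : ℤ)) + q).1 = q.1 := by simp
  rw [this]
  exact hq.2.1

theorem reach : ∀ n : ℕ, 1 ≤ n → ∀ h : ℕ → ℤ, validH n h →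
    Relation.ReflTransGen (MoveIn (triangle n)) (patt n (fun _ => (n : ℤ) - 1)) (patt n h) := by
  intro n
  induction n with
  | zero => intro hn; omega
  | succ n IH =>
    intro hn h hv
    rcases Nat.eq_zero_or_pos n with rfl | hn1
    · have h0 : h 0 = 0 := by
        have := hv 0 (by omega); push_cast at this; omega
      have he : patt 1 h = patt 1 (fun _ => ((1 : ℕ) : ℤ) - 1) := by
        apply patt_congr; intro a ha; interval_cases a; omega
      rw [he]
    · set f : Pt → Pt := fun p => ((0 : ℤ), (1 : ℤ)) + p with hfdef
      have hfinj : Function.Injective f := fun a b hab => add_left_cancel hab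
      have hfT : ∀ v : Pt, ∃ w : Pt, f '' transl v Tshape = transl w Tshape :=
        fun v => ⟨(0, 1) + v, transl_transl _ _ _⟩
      have htransF : ∀ P : Finset Pt, transF (0, 1) P = P.image f := fun _ => rfl
      have lift : ∀ g g' : ℕ → ℤ, validH n g → validH n g' → ∀ y : ℤ, 0 ≤ y → y ≤ (n : ℤ) →
          Relation.ReflTransGen (MoveIn (triangle (n + 1)))
            (insert (((n : ℤ), y) : Pt) (transF (0, 1) (patt n g)))
            (insert (((n : ℤ), y) : Pt) (transF (0, 1) (patt n g'))) := by
        intro g g' hg hg' y hy0 hyn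
        have p3 : Relation.ReflTransGen (MoveIn (triangle n)) (patt n g) (patt n g') :=
          (rtg_moveIn_symm (IH hn1 g hg)).trans (IH hn1 g' hg')
        have p4 : Relation.ReflTransGen (MoveIn (f '' triangle n))
            ((patt n g).image f) ((patt n g').image f) :=
          Relation.ReflTransGen.lift (fun P => P.image f) (fun P Q hPQ => moveIn_image hfinj hfT hPQ) _ _ p3
        have p5 := Relation.ReflTransGen.lift (fun P => insert (((n : ℤ), y) : Pt) P)
          (fun P Q hPQ => moveIn_insert (triangle_shift_halfplane n) (le_refl (n : ℤ)) hPQ) _ _ p4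
        have hsub : insert (((n : ℤ), y) : Pt) ((fun p : Pt => ((0 : ℤ), (1 : ℤ)) + p) '' triangle n)
            ⊆ triangle (n + 1) := by
          refine Set.insert_subset ?_ (triangle_shift_subset n)
          refine ⟨?_, ?_, ?_, ?_, ?_⟩ <;> simp [triangle] <;> push_cast <;> omega
        rw [htransF, htransF]
        exact Relation.ReflTransGen.mono (fun P Q hPQ => moveIn_mono hsub hPQ) _ _ p5
      set gg : ℤ → ℕ → ℤ := fun y a => if a = n - 1 then max y 1 - 1 else (n : ℤ) - 1 with hgg
      have hggvalid : ∀ y : ℤ, 0 ≤ y → y ≤ (n : ℤ) → validH n (gg y) := by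
        intro y hy0 hyn a ha
        simp only [hgg]
        split_ifs with he
        · subst he; omega
        · omega
      have walk : ∀ k : ℕ, k ≤ n →
          Relation.ReflTransGen (MoveIn (triangle (n + 1)))
            (insert (((n : ℤ), (n : ℤ)) : Pt) (transF (0, 1) (patt n (gg (n : ℤ)))))
            (insert (((n : ℤ), (n : ℤ) - (k : ℤ)) : Pt)
              (transF (0, 1) (patt n (gg ((n : ℤ) - (k : ℤ)))))) := by
        intro k
        induction k with
        | zero =>
          intro _
          have hz : (n : ℤ) - ((0 : ℕ) : ℤ) = (n : ℤ) := by push_cast; ring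
          rw [hz]
        | succ k IHk =>
          intro hk
          have step1 := IHk (by omega)
          have hy1 : 1 ≤ (n : ℤ) - (k : ℤ) := by omega
          have hyn : (n : ℤ) - (k : ℤ) ≤ (n : ℤ) := by omega
          have hcol : gg ((n : ℤ) - (k : ℤ)) (n - 1) = ((n : ℤ) - (k : ℤ)) - 1 := by
            simp only [hgg, if_pos rfl]; omega
          have step2 := stepDown n hn1 (gg ((n : ℤ) - (k : ℤ)))
            (hggvalid _ (by omega) hyn) ((n : ℤ) - (k : ℤ)) hy1 hyn hcol
          have step3 := lift (gg ((n : ℤ) - (k : ℤ))) (gg ((n : ℤ) - (k : ℤ) - 1))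
            (hggvalid _ (by omega) hyn) (hggvalid _ (by omega) (by omega))
            ((n : ℤ) - (k : ℤ) - 1) (by omega) (by omega)
          have hc : (n : ℤ) - ((k : ℕ) + 1 : ℕ) = (n : ℤ) - (k : ℤ) - 1 := by push_cast; ring
          rw [hc]
          exact (step1.trans ((Relation.ReflTransGen.single step2).trans step3))
      have hstart : patt (n + 1) (fun _ => ((n + 1 : ℕ) : ℤ) - 1)
          = insert (((n : ℤ), (n : ℤ)) : Pt) (transF (0, 1) (patt n (gg (n : ℤ)))) := by
        rw [patt_succ]
        have e1 : (((n : ℤ), ((n + 1 : ℕ) : ℤ) - 1) : Pt) = (((n : ℤ), (n : ℤ)) : Pt) := by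
          simp [Prod.ext_iff]
        have e2 : patt n (fun a => ((n + 1 : ℕ) : ℤ) - 1 - 1) = patt n (gg (n : ℤ)) := by
          apply patt_congr
          intro a ha
          simp only [hgg]
          split_ifs <;> omega
        rw [e1, e2]
      have hm := hv n (by omega)
      have hm0 : 0 ≤ h n := by push_cast at hm; omega
      have hmn : h n ≤ (n : ℤ) := by push_cast at hm; omega
      have hv' : validH n (fun a => h a - 1) := by
        intro a ha
        have := hv a (by omega)
        push_cast at this ⊢
        omega
      have hk : (((((n : ℤ) - h n).toNat) : ℕ) : ℤ) = (n : ℤ) - h n :=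
        Int.toNat_of_nonneg (by omega)
      have w := walk (((n : ℤ) - h n).toNat) (by omega)
      rw [hk] at w
      have hnk : (n : ℤ) - ((n : ℤ) - h n) = h n := by ring
      rw [hnk] at w
      have final := lift (gg (h n)) (fun a => h a - 1) (hggvalid _ hm0 hmn) hv' (h n) hm0 hmn
      rw [patt_succ n h, hstart]
      exact w.trans final
lemma keyK (n : ℕ) (x : ℕ → ℤ)
    (hb : ∀ a, a < n → (n : ℤ) - 1 - a ≤ x a ∧ x a ≤ (n : ℤ) - 1)
    (hinj : ∀ a, a < n → ∀ b, b < n → x a = x b → a = b) :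
    ∀ a, a < n → x a = (n : ℤ) - 1 - a := by
  intro a
  induction a using Nat.strong_induction_on with
  | _ a IHa =>
    intro ha
    by_contra hne
    have h1 := hb a ha
    have hbz : ((((n : ℤ) - 1 - x a).toNat : ℕ) : ℤ) = (n : ℤ) - 1 - x a :=
      Int.toNat_of_nonneg (by omega)
    set b := ((n : ℤ) - 1 - x a).toNat with hbdef
    have hba : b < a := by omega
    have hxb := IHa b hba (by omega)
    exact absurd (hinj b (by omega) a ha (by omega)) (by omega)

/-- Transposition symmetry. -/
def sigm : Pt → Pt := fun p => (p.2, p.1)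

/-- Rotation-like symmetry (maps antidiagonals of `T_n` to columns). -/
def taum (n : ℕ) : Pt → Pt := fun p => (2 * (n : ℤ) - 2 - p.1 - p.2, p.1)

/-- Inverse of `taum`. -/
def taui (n : ℕ) : Pt → Pt := fun p => (p.2, 2 * (n : ℤ) - 2 - p.1 - p.2)

lemma sigm_inj : Function.Injective sigm := by
  rintro ⟨a, b⟩ ⟨c, d⟩ he
  simp [sigm, Prod.ext_iff] at he
  simp [Prod.ext_iff, he.1, he.2]

lemma taum_inj (n : ℕ) : Function.Injective (taum n) := by
  rintro ⟨a, b⟩ ⟨c, d⟩ he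
  simp [taum, Prod.ext_iff] at he
  simp only [Prod.mk.injEq]
  omega

lemma taui_inj (n : ℕ) : Function.Injective (taui n) := by
  rintro ⟨a, b⟩ ⟨c, d⟩ he
  simp [taui, Prod.ext_iff] at he
  simp only [Prod.mk.injEq]
  omega

lemma sigm_sigm (p : Pt) : sigm (sigm p) = p := rfl

lemma taui_taum (n : ℕ) (p : Pt) : taui n (taum n p) = p := by
  simp [taum, taui, Prod.ext_iff]; try ring

lemma taum_taui (n : ℕ) (p : Pt) : taum n (taui n p) = p := by
  simp [taum, taui, Prod.ext_iff]; try ring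

lemma image_sigm_sigm (P : Finset Pt) : (P.image sigm).image sigm = P := by
  rw [Finset.image_image]
  have h : sigm ∘ sigm = id := funext sigm_sigm
  rw [h, Finset.image_id]

lemma image_taui_taum (n : ℕ) (P : Finset Pt) : (P.image (taum n)).image (taui n) = P := by
  rw [Finset.image_image]
  have h : taui n ∘ taum n = id := funext (taui_taum n)
  rw [h, Finset.image_id]

lemma image_taum_taui (n : ℕ) (P : Finset Pt) : (P.image (taui n)).image (taum n) = P := by
  rw [Finset.image_image]
  have h : taum n ∘ taui n = id := funext (taum_taui n)
  rw [h, Finset.image_id]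

lemma image3 (f : Pt → Pt) (v : Pt) :
    f '' transl v Tshape = {f (v + (0, 1)), f (v + (1, 1)), f (v + (1, 0))} := by
  rw [translT_eq, Set.image_insert_eq, Set.image_insert_eq, Set.image_singleton]

lemma sigm_T (v : Pt) : ∃ w, sigm '' transl v Tshape = transl w Tshape := by
  refine ⟨(v.2, v.1), ?_⟩
  rw [image3, translT_eq]
  have e1 : sigm (v + (0, 1)) = (v.2, v.1) + (1, 0) := by simp [sigm, Prod.ext_iff]
  have e2 : sigm (v + (1, 1)) = (v.2, v.1) + (1, 1) := by simp [sigm, Prod.ext_iff]; try ring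
  have e3 : sigm (v + (1, 0)) = (v.2, v.1) + (0, 1) := by simp [sigm, Prod.ext_iff]
  rw [e1, e2, e3]
  ext p; simp only [Set.mem_insert_iff, Set.mem_singleton_iff]; tauto

lemma taum_T (n : ℕ) (v : Pt) : ∃ w, taum n '' transl v Tshape = transl w Tshape := by
  refine ⟨(2 * (n : ℤ) - 4 - v.1 - v.2, v.1), ?_⟩
  rw [image3, translT_eq]
  have e1 : taum n (v + (0, 1)) = (2 * (n : ℤ) - 4 - v.1 - v.2, v.1) + (1, 0) := by
    simp [taum, Prod.ext_iff]; try omega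
  have e2 : taum n (v + (1, 1)) = (2 * (n : ℤ) - 4 - v.1 - v.2, v.1) + (0, 1) := by
    simp [taum, Prod.ext_iff]; omega
  have e3 : taum n (v + (1, 0)) = (2 * (n : ℤ) - 4 - v.1 - v.2, v.1) + (1, 1) := by
    simp [taum, Prod.ext_iff]; omega
  rw [e1, e2, e3]
  ext p; simp only [Set.mem_insert_iff, Set.mem_singleton_iff]; tauto

lemma taui_T (n : ℕ) (v : Pt) : ∃ w, taui n '' transl v Tshape = transl w Tshape := by
  refine ⟨(v.2, 2 * (n : ℤ) - 4 - v.1 - v.2), ?_⟩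
  rw [image3, translT_eq]
  have e1 : taui n (v + (0, 1)) = (v.2, 2 * (n : ℤ) - 4 - v.1 - v.2) + (1, 1) := by
    simp [taui, Prod.ext_iff]; omega
  have e2 : taui n (v + (1, 1)) = (v.2, 2 * (n : ℤ) - 4 - v.1 - v.2) + (1, 0) := by
    simp [taui, Prod.ext_iff]; omega
  have e3 : taui n (v + (1, 0)) = (v.2, 2 * (n : ℤ) - 4 - v.1 - v.2) + (0, 1) := by
    simp [taui, Prod.ext_iff]; omega
  rw [e1, e2, e3]
  ext p; simp only [Set.mem_insert_iff, Set.mem_singleton_iff]; tauto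

/-- The family of column transversals of `T_n`. -/
noncomputable def famA (n : ℕ) : Finset (Finset Pt) :=
  (Fintype.piFinset (fun a : Fin n => Finset.Icc ((n : ℤ) - 1 - (a : ℤ)) ((n : ℤ) - 1))).image
    (fun h => Finset.univ.image (fun a : Fin n => (((a : ℤ), h a) : Pt)))

lemma mem_famA_iff {n : ℕ} {P : Finset Pt} :
    P ∈ famA n ↔ ∃ h : ℕ → ℤ, validH n h ∧ P = patt n h := by
  constructor
  · intro hP
    obtain ⟨h, hh, rfl⟩ := Finset.mem_image.mp hP
    rw [Fintype.mem_piFinset] at hh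
    refine ⟨fun a => if ha : a < n then h ⟨a, ha⟩ else 0, ?_, ?_⟩
    · intro a ha
      simp only [dif_pos ha]
      exact Finset.mem_Icc.mp (hh ⟨a, ha⟩)
    · ext p
      simp only [Finset.mem_image, Finset.mem_univ, true_and, mem_patt]
      constructor
      · rintro ⟨a, rfl⟩
        exact ⟨a.1, a.2, by rw [dif_pos a.2]⟩
      · rintro ⟨a, ha, rfl⟩
        exact ⟨⟨a, ha⟩, by rw [dif_pos ha]⟩
  · rintro ⟨h, hvh, rfl⟩
    apply Finset.mem_image.mpr
    refine ⟨fun a : Fin n => h a, ?_, ?_⟩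
    · rw [Fintype.mem_piFinset]
      intro a
      exact Finset.mem_Icc.mpr (hvh a a.2)
    · ext p
      simp only [Finset.mem_image, Finset.mem_univ, true_and, mem_patt]
      constructor
      · rintro ⟨a, rfl⟩
        exact ⟨a.1, a.2, rfl⟩
      · rintro ⟨a, ha, rfl⟩
        exact ⟨⟨a, ha⟩, rfl⟩

lemma famA_card (n : ℕ) : (famA n).card = Nat.factorial n := by
  have hinj : Set.InjOn (fun h : Fin n → ℤ => Finset.univ.image (fun a : Fin n => (((a : ℤ), h a) : Pt)))
      ↑(Fintype.piFinset (fun a : Fin n => Finset.Icc ((n : ℤ) - 1 - (a : ℤ)) ((n : ℤ) - 1))) := by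
    intro h1 _ h2 _ he
    have he2 : Finset.univ.image (fun a : Fin n => (((a : ℤ), h1 a) : Pt))
        = Finset.univ.image (fun a : Fin n => (((a : ℤ), h2 a) : Pt)) := he
    funext a
    have hm : (((a : ℤ), h1 a) : Pt) ∈ Finset.univ.image (fun b : Fin n => (((b : ℤ), h2 b) : Pt)) := by
      rw [← he2]
      exact Finset.mem_image_of_mem _ (Finset.mem_univ a)
    obtain ⟨b, -, hb⟩ := Finset.mem_image.mp hm
    have hfst : ((b : ℕ) : ℤ) = ((a : ℕ) : ℤ) := congrArg Prod.fst hb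
    have hsnd : h2 b = h1 a := congrArg Prod.snd hb
    have hval : (b : ℕ) = (a : ℕ) := by exact_mod_cast hfst
    have hba : b = a := Fin.ext hval
    subst hba
    exact hsnd.symm
  rw [famA, Finset.card_image_of_injOn hinj, Fintype.card_piFinset]
  have hc : ∀ a : Fin n, (Finset.Icc ((n : ℤ) - 1 - (a : ℤ)) ((n : ℤ) - 1)).card = a.1 + 1 := by
    intro a
    rw [Int.card_Icc]
    omega
  rw [Finset.prod_congr rfl (fun a _ => hc a), Fin.prod_univ_eq_prod_range (fun a => a + 1)]
  exact Finset.prod_range_add_one_eq_factorial n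
/-- The row transversal family. -/
noncomputable def famB (n : ℕ) : Finset (Finset Pt) := (famA n).image (fun Q => Q.image sigm)

/-- The antidiagonal transversal family. -/
noncomputable def famC (n : ℕ) : Finset (Finset Pt) := (famA n).image (fun Q => Q.image (taui n))

lemma mem_famB_iff {n : ℕ} {P : Finset Pt} : P ∈ famB n ↔ P.image sigm ∈ famA n := by
  constructor
  · intro hP
    obtain ⟨Q, hQ, rfl⟩ := Finset.mem_image.mp hP
    rwa [image_sigm_sigm]
  · intro hP
    exact Finset.mem_image.mpr ⟨P.image sigm, hP, image_sigm_sigm P⟩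

lemma mem_famC_iff {n : ℕ} {P : Finset Pt} : P ∈ famC n ↔ P.image (taum n) ∈ famA n := by
  constructor
  · intro hP
    obtain ⟨Q, hQ, rfl⟩ := Finset.mem_image.mp hP
    rwa [image_taum_taui]
  · intro hP
    exact Finset.mem_image.mpr ⟨P.image (taum n), hP, image_taui_taum n P⟩

lemma famB_card (n : ℕ) : (famB n).card = Nat.factorial n := by
  rw [famB, Finset.card_image_of_injective _ (Finset.image_injective sigm_inj), famA_card]

lemma famC_card (n : ℕ) : (famC n).card = Nat.factorial n := by
  rw [famC, Finset.card_image_of_injective _ (Finset.image_injective (taui_inj n)), famA_card]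

lemma dlineF_eq_patt (n : ℕ) : dlineF n = patt n (fun a => (n : ℤ) - 1 - (a : ℤ)) := rfl

lemma lineF_mem_famA (n : ℕ) : lineF n ∈ famA n := by
  rw [mem_famA_iff]
  exact ⟨fun _ => (n : ℤ) - 1, fun a ha => by refine ⟨?_, ?_⟩ <;> simp only [] <;> omega, lineF_eq_patt n⟩

lemma dlineF_mem_famA (n : ℕ) : dlineF n ∈ famA n := by
  rw [mem_famA_iff]
  exact ⟨fun a => (n : ℤ) - 1 - (a : ℤ), fun a ha => by refine ⟨?_, ?_⟩ <;> simp only [] <;> omega, dlineF_eq_patt n⟩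

lemma image_patt {n : ℕ} (f : Pt → Pt) (h : ℕ → ℤ) :
    (patt n h).image f = (Finset.range n).image (fun a : ℕ => f ((a : ℤ), h a)) := by
  rw [patt, Finset.image_image]
  rfl

lemma sigm_dlineF (n : ℕ) : (dlineF n).image sigm = dlineF n := by
  rw [dlineF_eq_patt, image_patt]
  ext p
  simp only [Finset.mem_image, Finset.mem_range, mem_patt]
  constructor
  · rintro ⟨a, ha, rfl⟩
    refine ⟨n - 1 - a, by omega, ?_⟩
    simp [sigm, Prod.ext_iff]
    first
      | omega
      | (constructor <;> omega)
  · rintro ⟨a, ha, rfl⟩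
    refine ⟨n - 1 - a, by omega, ?_⟩
    simp [sigm, Prod.ext_iff]
    first
      | omega
      | (constructor <;> omega)

lemma dlineF_mem_famB (n : ℕ) : dlineF n ∈ famB n := by
  rw [mem_famB_iff, sigm_dlineF]
  exact dlineF_mem_famA n

lemma taum_lineF (n : ℕ) : (lineF n).image (taum n) = dlineF n := by
  rw [lineF_eq_patt, image_patt, dlineF_eq_patt]
  ext p
  simp only [Finset.mem_image, Finset.mem_range, mem_patt]
  constructor
  · rintro ⟨a, ha, rfl⟩
    refine ⟨n - 1 - a, by omega, ?_⟩
    simp [taum, Prod.ext_iff]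
    first
      | omega
      | (constructor <;> omega)
  · rintro ⟨a, ha, rfl⟩
    refine ⟨n - 1 - a, by omega, ?_⟩
    simp [taum, Prod.ext_iff]
    first
      | omega
      | (constructor <;> omega)

lemma lineF_mem_famC (n : ℕ) : lineF n ∈ famC n := by
  rw [mem_famC_iff, taum_lineF]
  exact dlineF_mem_famA n

lemma taum_vlineF (n : ℕ) : (vlineF n).image (taum n) = lineF n := by
  ext p
  simp only [vlineF, lineF, Finset.image_image, Finset.mem_image, Finset.mem_range,
    Function.comp]
  constructor
  · rintro ⟨b, hb, rfl⟩
    refine ⟨n - 1 - b, by omega, ?_⟩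
    simp [taum, Prod.ext_iff]
    first
      | omega
      | (constructor <;> omega)
  · rintro ⟨a, ha, rfl⟩
    refine ⟨n - 1 - a, by omega, ?_⟩
    simp [taum, Prod.ext_iff]
    first
      | omega
      | (constructor <;> omega)

lemma vlineF_mem_famC (n : ℕ) : vlineF n ∈ famC n := by
  rw [mem_famC_iff, taum_vlineF]
  exact lineF_mem_famA n
lemma famA_famB_inter {n : ℕ} {P : Finset Pt} (hA : P ∈ famA n) (hB : P ∈ famB n) :
    P = dlineF n := by
  obtain ⟨h, hvh, rfl⟩ := mem_famA_iff.mp hA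
  rw [mem_famB_iff] at hB
  obtain ⟨g, hvg, hg⟩ := mem_famA_iff.mp hB
  have key : ∀ a : ℕ, a < n → ∃ b : ℕ, b < n ∧ h a = (b : ℤ) ∧ (a : ℤ) = g b := by
    intro a ha
    have hmem : sigm ((a : ℤ), h a) ∈ (patt n h).image sigm :=
      Finset.mem_image_of_mem _ (mem_patt.mpr ⟨a, ha, rfl⟩)
    rw [hg] at hmem
    obtain ⟨b, hb, hpb⟩ := mem_patt.mp hmem
    exact ⟨b, hb, congrArg Prod.fst hpb, congrArg Prod.snd hpb⟩
  have hinj : ∀ a, a < n → ∀ b, b < n → h a = h b → a = b := by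
    intro a ha b hb he
    obtain ⟨c, hc, hc1, hc2⟩ := key a ha
    obtain ⟨d, hd, hd1, hd2⟩ := key b hb
    have hcd : c = d := by omega
    subst hcd
    omega
  have hxx := keyK n h hvh hinj
  rw [dlineF_eq_patt]
  exact patt_congr (fun a ha => hxx a ha)

lemma famA_famC_inter {n : ℕ} {P : Finset Pt} (hA : P ∈ famA n) (hC : P ∈ famC n) :
    P = lineF n := by
  obtain ⟨h, hvh, rfl⟩ := mem_famA_iff.mp hA
  rw [mem_famC_iff] at hC
  obtain ⟨g, hvg, hg⟩ := mem_famA_iff.mp hC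
  have key : ∀ a : ℕ, a < n → ∃ b : ℕ, b < n ∧
      2 * (n : ℤ) - 2 - a - h a = (b : ℤ) ∧ (a : ℤ) = g b := by
    intro a ha
    have hmem : taum n ((a : ℤ), h a) ∈ (patt n h).image (taum n) :=
      Finset.mem_image_of_mem _ (mem_patt.mpr ⟨a, ha, rfl⟩)
    rw [hg] at hmem
    obtain ⟨b, hb, hpb⟩ := mem_patt.mp hmem
    exact ⟨b, hb, congrArg Prod.fst hpb, congrArg Prod.snd hpb⟩
  set x : ℕ → ℤ := fun a => 2 * (n : ℤ) - 2 - a - h a with hx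
  have hbnd : ∀ a, a < n → (n : ℤ) - 1 - a ≤ x a ∧ x a ≤ (n : ℤ) - 1 := by
    intro a ha
    obtain ⟨b, hb, hb1, hb2⟩ := key a ha
    have := hvh a ha
    simp only [hx]
    omega
  have hinj : ∀ a, a < n → ∀ b, b < n → x a = x b → a = b := by
    intro a ha b hb he
    obtain ⟨c, hc, hc1, hc2⟩ := key a ha
    obtain ⟨d, hd, hd1, hd2⟩ := key b hb
    simp only [hx] at he
    have hcd : c = d := by omega
    subst hcd
    omega
  have hxx := keyK n x hbnd hinj
  rw [lineF_eq_patt]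
  refine patt_congr (fun a ha => ?_)
  have := hxx a ha
  simp only [hx] at this
  omega

lemma famB_famC_inter {n : ℕ} {P : Finset Pt} (hB : P ∈ famB n) (hC : P ∈ famC n) :
    P = vlineF n := by
  rw [mem_famB_iff] at hB
  obtain ⟨h, hvh, hh⟩ := mem_famA_iff.mp hB
  have hP : P = (patt n h).image sigm := by rw [← hh, image_sigm_sigm]
  rw [mem_famC_iff] at hC
  obtain ⟨g, hvg, hg⟩ := mem_famA_iff.mp hC
  have key : ∀ a : ℕ, a < n → ∃ b : ℕ, b < n ∧
      2 * (n : ℤ) - 2 - h a - a = (b : ℤ) ∧ h a = g b := by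
    intro a ha
    have hm1 : sigm ((a : ℤ), h a) ∈ P := by
      rw [hP]; exact Finset.mem_image_of_mem _ (mem_patt.mpr ⟨a, ha, rfl⟩)
    have hmem : taum n (sigm ((a : ℤ), h a)) ∈ P.image (taum n) :=
      Finset.mem_image_of_mem _ hm1
    rw [hg] at hmem
    obtain ⟨b, hb, hpb⟩ := mem_patt.mp hmem
    exact ⟨b, hb, congrArg Prod.fst hpb, congrArg Prod.snd hpb⟩
  set x : ℕ → ℤ := fun a => 2 * (n : ℤ) - 2 - h a - a with hx
  have hbnd : ∀ a, a < n → (n : ℤ) - 1 - a ≤ x a ∧ x a ≤ (n : ℤ) - 1 := by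
    intro a ha
    obtain ⟨b, hb, hb1, hb2⟩ := key a ha
    have := hvh a ha
    simp only [hx]
    omega
  have hinj : ∀ a, a < n → ∀ b, b < n → x a = x b → a = b := by
    intro a ha b hb he
    obtain ⟨c, hc, hc1, hc2⟩ := key a ha
    obtain ⟨d, hd, hd1, hd2⟩ := key b hb
    simp only [hx] at he
    have hcd : c = d := by omega
    subst hcd
    omega
  have hxx := keyK n x hbnd hinj
  rw [hP, image_patt, vlineF]
  apply Finset.image_congr
  intro a ha
  have h1 : 2 * (n : ℤ) - 2 - h a - a = (n : ℤ) - 1 - a := hxx a (Finset.mem_range.mp ha)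
  have h2 : h a = (n : ℤ) - 1 := by omega
  simp only [sigm, Prod.mk.injEq, h2]
  try exact ⟨rfl, rfl⟩

lemma line_ne_vline {n : ℕ} (hn : 2 ≤ n) : lineF n ≠ vlineF n := by
  intro he
  have hm : ((0 : ℤ), (n : ℤ) - 1) ∈ lineF n := by
    simp only [lineF, Finset.mem_image, Finset.mem_range]
    exact ⟨0, by omega, by simp⟩
  rw [he] at hm
  simp only [vlineF, Finset.mem_image, Finset.mem_range] at hm
  obtain ⟨b, hb, hpb⟩ := hm
  have h1 : (n : ℤ) - 1 = 0 := congrArg Prod.fst hpb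
  omega

lemma line_ne_dline {n : ℕ} (hn : 2 ≤ n) : lineF n ≠ dlineF n := by
  intro he
  have hm : ((1 : ℤ), (n : ℤ) - 1) ∈ lineF n := by
    simp only [lineF, Finset.mem_image, Finset.mem_range]
    exact ⟨1, by omega, by simp⟩
  rw [he] at hm
  simp only [dlineF, Finset.mem_image, Finset.mem_range] at hm
  obtain ⟨a, ha, hpa⟩ := hm
  have h1 : (a : ℤ) = 1 := congrArg Prod.fst hpa
  have h2 : (n : ℤ) - 1 - a = (n : ℤ) - 1 := congrArg Prod.snd hpa
  omega

lemma vline_ne_dline {n : ℕ} (hn : 2 ≤ n) : vlineF n ≠ dlineF n := by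
  intro he
  have hm : ((n : ℤ) - 1, (n : ℤ) - 1) ∈ vlineF n := by
    simp only [vlineF, Finset.mem_image, Finset.mem_range]
    exact ⟨n - 1, by omega, by simp [Prod.ext_iff]; omega⟩
  rw [he] at hm
  simp only [dlineF, Finset.mem_image, Finset.mem_range] at hm
  obtain ⟨a, ha, hpa⟩ := hm
  have h1 : (a : ℤ) = (n : ℤ) - 1 := congrArg Prod.fst hpa
  have h2 : (n : ℤ) - 1 - a = (n : ℤ) - 1 := congrArg Prod.snd hpa
  omega
lemma inOrbit_of_moveIn {S : Set Pt} {P Q : Finset Pt}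
    (h : Relation.ReflTransGen (MoveIn S) P Q) : InOrbit P Q :=
  Relation.ReflTransGen.mono (fun _ _ hpq => hpq.1) _ _ h

lemma inOrbit_symm {P Q : Finset Pt} (h : InOrbit P Q) : InOrbit Q P :=
  by haveI : Std.Symm Move := ⟨fun _ _ hab => move_symm hab⟩; exact Std.Symm.symm (r := Relation.ReflTransGen Move) _ _ h

lemma inOrbit_image {f : Pt → Pt} (hf : Function.Injective f)
    (hT : ∀ v : Pt, ∃ w, f '' transl v Tshape = transl w Tshape)
    {P Q : Finset Pt} (h : InOrbit P Q) : InOrbit (P.image f) (Q.image f) :=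
  Relation.ReflTransGen.lift _ (fun _ _ hpq => move_image hf hT hpq) _ _ h

lemma sigm_lineF (n : ℕ) : (lineF n).image sigm = vlineF n := by
  rw [lineF_eq_patt, image_patt, vlineF]
  apply Finset.image_congr
  intro a _
  simp [sigm]

lemma orbitA {n : ℕ} (hn : 1 ≤ n) {P : Finset Pt} (hP : P ∈ famA n) :
    InOrbit (lineF n) P := by
  obtain ⟨h, hvh, rfl⟩ := mem_famA_iff.mp hP
  rw [lineF_eq_patt]
  exact inOrbit_of_moveIn (reach n hn h hvh)

lemma orbitC {n : ℕ} (hn : 1 ≤ n) {P : Finset Pt} (hP : P ∈ famC n) :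
    InOrbit (lineF n) P := by
  rw [mem_famC_iff] at hP
  have h1 : InOrbit (lineF n) (P.image (taum n)) := orbitA hn hP
  have h2 : InOrbit (lineF n) ((lineF n).image (taum n)) := by
    rw [taum_lineF]; exact orbitA hn (dlineF_mem_famA n)
  have h3 : InOrbit ((lineF n).image (taum n)) (P.image (taum n)) :=
    (inOrbit_symm h2).trans h1
  have h4 := inOrbit_image (taui_inj n) (taui_T n) h3
  rwa [image_taui_taum, image_taui_taum] at h4

lemma orbitB {n : ℕ} (hn : 1 ≤ n) {P : Finset Pt} (hP : P ∈ famB n) :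
    InOrbit (lineF n) P := by
  rw [mem_famB_iff] at hP
  have h1 : InOrbit (lineF n) (P.image sigm) := orbitA hn hP
  have h2 : InOrbit (lineF n) ((lineF n).image sigm) := by
    rw [sigm_lineF]; exact orbitC hn (vlineF_mem_famC n)
  have h3 : InOrbit ((lineF n).image sigm) (P.image sigm) :=
    (inOrbit_symm h2).trans h1
  have h4 := inOrbit_image sigm_inj sigm_T h3
  rwa [image_sigm_sigm, image_sigm_sigm] at h4

/-- the orbit of the line `L_n` contains at least `3·n! − 3`
patterns, for `n ≥ 2`. -/
theorem line_orbit_lower_bound (n : ℕ) (hn : 2 ≤ n) :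
    ∃ S : Finset (Finset Pt),
      S.card = 3 * Nat.factorial n - 3 ∧ ∀ P ∈ S, InOrbit (lineF n) P := by
  have hn1 : 1 ≤ n := by omega
  refine ⟨famA n ∪ (famB n \ {dlineF n}) ∪
    (famC n \ ({lineF n, vlineF n} : Finset (Finset Pt))), ?_, ?_⟩
  · have hd1 : Disjoint (famA n) (famB n \ {dlineF n}) := by
      rw [Finset.disjoint_left]
      intro P hPA hPB
      rw [Finset.mem_sdiff] at hPB
      exact hPB.2 (by rw [famA_famB_inter hPA hPB.1]; exact Finset.mem_singleton_self _)
    have hd2 : Disjoint (famA n ∪ (famB n \ {dlineF n}))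
        (famC n \ ({lineF n, vlineF n} : Finset (Finset Pt))) := by
      rw [Finset.disjoint_left]
      intro P hPAB hPC
      rw [Finset.mem_sdiff] at hPC
      rcases Finset.mem_union.mp hPAB with hPA | hPB
      · exact hPC.2 (by rw [famA_famC_inter hPA hPC.1]; exact Finset.mem_insert_self _ _)
      · rw [Finset.mem_sdiff] at hPB
        exact hPC.2 (by
          rw [famB_famC_inter hPB.1 hPC.1]
          exact Finset.mem_insert_of_mem (Finset.mem_singleton_self _))
    rw [Finset.card_union_of_disjoint hd2, Finset.card_union_of_disjoint hd1]
    rw [Finset.card_sdiff_of_subset (Finset.singleton_subset_iff.mpr (dlineF_mem_famB n)), famB_card]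
    rw [Finset.card_sdiff_of_subset (Finset.insert_subset_iff.mpr
      ⟨lineF_mem_famC n, Finset.singleton_subset_iff.mpr (vlineF_mem_famC n)⟩), famC_card]
    have h2 : ({lineF n, vlineF n} : Finset (Finset Pt)).card = 2 := by
      rw [Finset.card_insert_of_notMem (by
        simp only [Finset.mem_singleton]; exact line_ne_vline hn), Finset.card_singleton]
    rw [famA_card, h2, Finset.card_singleton]
    have hf : 2 ≤ Nat.factorial n := le_trans hn (Nat.self_le_factorial n)
    omega
  · intro P hP
    rcases Finset.mem_union.mp hP with hP' | hPC
    · rcases Finset.mem_union.mp hP' with hPA | hPB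
      · exact orbitA hn1 hPA
      · exact orbitB hn1 (Finset.mem_sdiff.mp hPB).1
    · exact orbitC hn1 (Finset.mem_sdiff.mp hPC).1
end

section
/- Any transversal from a corner is a fill matrix: if P ⊆ T_n contains exactly one point from each row of T_n (i.e., for each b ∈ {0,…,n−1}, exactly one point (a,b) with n−1−b ≤ a ≤ n−1), then φ(P) = T_n, so P is in the solitaire orbit of L_n. -/
open Set Relation

/-! ### Auxiliary lemmas -/

lemma transl_tri (x y : ℤ) :
    transl (x, y) Tshape = {((x, y+1) : Pt), (x+1, y+1), (x+1, y)} := by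
  simp [transl, Tshape, Set.image_insert_eq, Prod.ext_iff]

lemma transl_tri_finite (v : Pt) : (transl v Tshape).Finite := by
  apply Set.Finite.image
  exact (Set.finite_singleton _).insert _ |>.insert _

lemma inter_two {F : Set Pt} {p q r : Pt} (hp : p ∈ F) (hq : q ∈ F) (hr : r ∉ F)
    (hpq : p ≠ q) : (F ∩ ({p, q, r} : Set Pt)).ncard = 2 := by
  have : F ∩ ({p, q, r} : Set Pt) = {p, q} := by
    ext z
    constructor
    · rintro ⟨hz, (rfl | rfl | rfl)⟩
      · exact Or.inl rfl
      · exact Or.inr rfl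
      · exact absurd hz hr
    · rintro (rfl | rfl) <;> exact ⟨by assumption, by simp⟩
  rw [this, Set.ncard_pair hpq]

lemma subset_fill (P : Set Pt) : P ⊆ fill P := by
  intro p hp F hF
  exact hF.1 hp

lemma fill_subset {P F : Set Pt} (h1 : P ⊆ F) (h2 : Filled F) : fill P ⊆ F :=
  Set.sInter_subset_of_mem ⟨h1, h2⟩

lemma filled_fill (P : Set Pt) : Filled (fill P) := by
  intro v h2 z hz F hF
  apply hF.2 v _ hz
  calc (2 : ℕ) ≤ (fill P ∩ transl v Tshape).ncard := h2
    _ ≤ (F ∩ transl v Tshape).ncard := by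
        apply Set.ncard_le_ncard
        · exact Set.inter_subset_inter_left _ (fill_subset hF.1 hF.2)
        · exact (transl_tri_finite v).inter_of_right _

lemma filled_two {F : Set Pt} (hF : Filled F) {x y : ℤ} {p q : Pt}
    (hp : p ∈ F) (hq : q ∈ F) (hpq : p ≠ q)
    (hpT : p ∈ transl (x, y) Tshape) (hqT : q ∈ transl (x, y) Tshape) :
    transl (x, y) Tshape ⊆ F := by
  apply hF
  have hsub : ({p, q} : Set Pt) ⊆ F ∩ transl (x, y) Tshape := by
    rintro z (rfl | rfl) <;> exact ⟨by assumption, by assumption⟩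
  calc (2 : ℕ) = ({p, q} : Set Pt).ncard := (Set.ncard_pair hpq).symm
    _ ≤ _ := Set.ncard_le_ncard hsub ((transl_tri_finite _).inter_of_right _)

lemma mem_transl_tri {x y : ℤ} (p : Pt)
    (h : p = (x, y+1) ∨ p = (x+1, y+1) ∨ p = (x+1, y)) :
    p ∈ transl (x, y) Tshape := by
  rw [transl_tri]
  rcases h with rfl | rfl | rfl <;> simp

/-- vertical pair `(c,b), (c,b-1)` yields `(c-1,b)`. -/
lemma ruleL {F : Set Pt} (hF : Filled F) {c b : ℤ}
    (h1 : ((c, b) : Pt) ∈ F) (h2 : ((c, b-1) : Pt) ∈ F) : ((c-1, b) : Pt) ∈ F := by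
  have := filled_two hF (x := c-1) (y := b-1) h1 h2
    (by simp [Prod.ext_iff]; try omega)
    (mem_transl_tri _ (by right; left; simp [Prod.ext_iff]; try omega))
    (mem_transl_tri _ (by right; right; simp [Prod.ext_iff]; try omega))
  exact this (mem_transl_tri _ (by left; simp [Prod.ext_iff]; try omega))

/-- horizontal pair `(c-1,b), (c,b)` yields `(c,b-1)`. -/
lemma ruleD {F : Set Pt} (hF : Filled F) {c b : ℤ}
    (h1 : ((c-1, b) : Pt) ∈ F) (h2 : ((c, b) : Pt) ∈ F) : ((c, b-1) : Pt) ∈ F := by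
  have := filled_two hF (x := c-1) (y := b-1) h1 h2
    (by simp [Prod.ext_iff]; try omega)
    (mem_transl_tri _ (by left; simp [Prod.ext_iff]; try omega))
    (mem_transl_tri _ (by right; left; simp [Prod.ext_iff]; try omega))
  exact this (mem_transl_tri _ (by right; right; simp [Prod.ext_iff]; try omega))

/-- diagonal pair `(c,b), (c+1,b-1)` yields `(c+1,b)`. -/
lemma ruleR {F : Set Pt} (hF : Filled F) {c b : ℤ}
    (h1 : ((c, b) : Pt) ∈ F) (h2 : ((c+1, b-1) : Pt) ∈ F) : ((c+1, b) : Pt) ∈ F := by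
  have := filled_two hF (x := c) (y := b-1) h1 h2
    (by simp [Prod.ext_iff]; try omega)
    (mem_transl_tri _ (by left; simp [Prod.ext_iff]; try omega))
    (mem_transl_tri _ (by right; right; simp [Prod.ext_iff]; try omega))
  exact this (mem_transl_tri _ (by right; left; simp [Prod.ext_iff]; try omega))

lemma filled_triangle (n : ℕ) : Filled (triangle n) := by
  intro v h2
  obtain ⟨x, y⟩ := v
  rw [transl_tri] at h2 ⊢
  have hfin : ((triangle n) ∩ ({((x, y+1) : Pt), (x+1, y+1), (x+1, y)} : Set Pt)).Finite := by
    apply Set.Finite.inter_of_right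
    exact (Set.finite_singleton _).insert _ |>.insert _
  obtain ⟨p, q, hp, hq, hpq⟩ := (Set.one_lt_ncard_iff hfin).mp h2
  obtain ⟨hp1, hp2⟩ := hp
  obtain ⟨hq1, hq2⟩ := hq
  intro r hr
  simp only [Set.mem_insert_iff, Set.mem_singleton_iff] at hp2 hq2 hr
  simp only [triangle, Set.mem_setOf_eq] at hp1 hq1 ⊢
  rcases hp2 with rfl | rfl | rfl <;> rcases hq2 with rfl | rfl | rfl <;>
    rcases hr with rfl | rfl | rfl <;>
    (try simp [Prod.ext_iff] at hpq hp1 hq1 ⊢) <;> omega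

lemma fill_eq_triangle (n : ℕ) (hn : 1 ≤ n) (P : Finset Pt)
    (hP : (P : Set Pt) ⊆ triangle n)
    (hrow : ∀ b : ℤ, 0 ≤ b → b < (n : ℤ) → ∃! a : ℤ, ((a, b) : Pt) ∈ P) :
    fill (P : Set Pt) = triangle n := by
  apply subset_antisymm
  · exact fill_subset hP (filled_triangle n)
  · set F := fill (P : Set Pt) with hFdef
    have hFfill : Filled F := filled_fill _
    have hPF : (P : Set Pt) ⊆ F := subset_fill _
    have key : ∀ b : ℕ, (b : ℤ) < n → ∀ a : ℤ,
        (n:ℤ)-1-(b:ℤ) ≤ a → a ≤ (n:ℤ)-1 → ((a, (b:ℤ)) : Pt) ∈ F := by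
      intro b
      induction b with
      | zero =>
        intro hb a h1 h2
        obtain ⟨a₀, ha₀, _⟩ := hrow 0 le_rfl (by exact_mod_cast hn)
        have hb0 := hP ha₀
        simp only [triangle, Set.mem_setOf_eq] at hb0
        have ha : a = a₀ := by push_cast at h1; omega
        subst ha
        simpa using hPF ha₀
      | succ b ih =>
        intro hb a h1 h2
        have hbn : (b : ℤ) < n := by push_cast at hb; omega
        obtain ⟨a₀, ha₀, _⟩ := hrow ((b:ℤ)+1) (by positivity) (by push_cast at hb; omega)
        have hb0 := hP ha₀
        simp only [triangle, Set.mem_setOf_eq] at hb0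
        have hmem : ((a₀, (b:ℤ)+1) : Pt) ∈ F := hPF ha₀
        have hBcast : ((b:ℤ)+1) - 1 = (b:ℤ) := by ring
        have left : ∀ k : ℕ, (n:ℤ)-1-((b:ℤ)+1) ≤ a₀ - (k:ℤ) →
            ((a₀ - (k:ℤ), (b:ℤ)+1) : Pt) ∈ F := by
          intro k
          induction k with
          | zero => intro _; simpa using hmem
          | succ k ihk =>
            intro hk
            push_cast at hk
            have h3 : ((a₀ - (k:ℤ), (b:ℤ)) : Pt) ∈ F := by
              apply ih hbn _ (by simp at hb0 ⊢; omega) (by simp at hb0 ⊢; omega)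
            have h4 : ((a₀ - (k:ℤ), (b:ℤ)+1) : Pt) ∈ F := ihk (by omega)
            have h3' : ((a₀ - (k:ℤ), ((b:ℤ)+1)-1) : Pt) ∈ F := by rwa [hBcast]
            have := ruleL hFfill h4 h3'
            have hcc : a₀ - ((k:ℤ)+1) = a₀ - (k:ℤ) - 1 := by ring
            push_cast
            rw [hcc]
            exact this
        have right : ∀ k : ℕ, a₀ + (k:ℤ) ≤ (n:ℤ)-1 →
            ((a₀ + (k:ℤ), (b:ℤ)+1) : Pt) ∈ F := by
          intro k
          induction k with
          | zero => intro _; simpa using hmem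
          | succ k ihk =>
            intro hk
            push_cast at hk
            have h4 : ((a₀ + (k:ℤ), (b:ℤ)+1) : Pt) ∈ F := ihk (by omega)
            have h3 : ((a₀ + (k:ℤ)+1, (b:ℤ)) : Pt) ∈ F := by
              apply ih hbn _ (by simp at hb0 ⊢; omega) (by omega)
            have h3' : ((a₀ + (k:ℤ)+1, ((b:ℤ)+1)-1) : Pt) ∈ F := by rwa [hBcast]
            have := ruleR hFfill h4 h3'
            push_cast
            have hcc : a₀ + ((k:ℤ)+1) = a₀ + (k:ℤ) + 1 := by ring
            rw [hcc]
            exact this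
        push_cast at h1 h2 ⊢
        rcases le_total a a₀ with hle | hle
        · have := left (a₀ - a).toNat (by omega)
          rw [Int.toNat_of_nonneg (by omega)] at this
          simpa using this
        · have := right (a - a₀).toNat (by omega)
          rw [Int.toNat_of_nonneg (by omega)] at this
          simpa using this
    rintro ⟨x, y⟩ hxy
    simp only [triangle, Set.mem_setOf_eq] at hxy
    have := key y.toNat (by omega) x (by rw [Int.toNat_of_nonneg (by omega)]; omega)
      (by omega)
    rwa [Int.toNat_of_nonneg (by omega)] at this

/-! ### Solitaire orbit machinery -/

noncomputable def rowSeg (lo hi b : ℤ) : Finset Pt := (Finset.Icc lo hi).image (fun c => (c, b))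

lemma mem_rowSeg {lo hi b x y : ℤ} :
    ((x, y) : Pt) ∈ rowSeg lo hi b ↔ lo ≤ x ∧ x ≤ hi ∧ y = b := by
  simp only [rowSeg, Finset.mem_image, Finset.mem_Icc, Prod.mk.injEq]
  constructor
  · rintro ⟨c, ⟨h1, h2⟩, rfl, rfl⟩; exact ⟨h1, h2, rfl⟩
  · rintro ⟨h1, h2, rfl⟩; exact ⟨x, ⟨h1, h2⟩, rfl, rfl⟩

def upSet (P : Finset Pt) (b : ℤ) : Finset Pt := P.filter (fun p => b < p.2)

lemma mem_upSet {P : Finset Pt} {b x y : ℤ} :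
    ((x, y) : Pt) ∈ upSet P b ↔ ((x, y) : Pt) ∈ P ∧ b < y := by
  simp [upSet]

noncomputable def stateS (P : Finset Pt) (n : ℕ) (b : ℤ) : Finset Pt :=
  upSet P b ∪ rowSeg ((n:ℤ)-1-b) ((n:ℤ)-1) b

noncomputable def stateA (P : Finset Pt) (n : ℕ) (b m : ℤ) : Finset Pt :=
  upSet P b ∪ rowSeg ((n:ℤ)-1-b) m b ∪ rowSeg (m+1) ((n:ℤ)-1) (b-1)

noncomputable def stateB (P : Finset Pt) (n : ℕ) (b a₀ l : ℤ) : Finset Pt :=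
  upSet P b ∪ rowSeg l a₀ b ∪ (rowSeg ((n:ℤ)-b) l (b-1) ∪ rowSeg (a₀+1) ((n:ℤ)-1) (b-1))

/-- Move removing `(c,b)` and adding `(c,b-1)`, using partner `(c-1,b)`. -/
lemma moveA (Q : Finset Pt) (c b : ℤ) (h1 : ((c-1, b) : Pt) ∈ Q)
    (h2 : ((c, b) : Pt) ∈ Q) (h3 : ((c, b-1) : Pt) ∉ Q) :
    Move Q (insert ((c, b-1) : Pt) (Q.erase ((c, b) : Pt))) := by
  refine ⟨((c-1, b-1) : Pt), (1, 1), (1, 0), by simp [Tshape], by simp [Tshape],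
    by simp [Prod.ext_iff], ?_, ?_, ?_, ?_⟩
  · show ((c-1+1, b-1+1) : Pt) ∈ Q
    convert h2 using 2 <;> ring
  · show ((c-1+1, b-1+0) : Pt) ∉ Q
    convert h3 using 2 <;> ring
  · rw [transl_tri]
    have e1 : ((c-1, (b-1)+1) : Pt) = (c-1, b) := by norm_num
    have e2 : ((c-1+1, (b-1)+1) : Pt) = (c, b) := by norm_num
    have e3 : ((c-1+1, b-1) : Pt) = (c, b-1) := by norm_num
    rw [e1, e2, e3]
    exact inter_two h1 h2 h3 (by simp [Prod.ext_iff])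
  · have e2 : ((c-1, b-1) : Pt) + (1, 1) = (c, b) := by
      show ((c-1+1, b-1+1) : Pt) = _ ; norm_num
    have e3 : ((c-1, b-1) : Pt) + (1, 0) = (c, b-1) := by
      show ((c-1+1, b-1+0) : Pt) = _ ; norm_num
    rw [e2, e3, Finset.coe_insert, Finset.coe_erase]

/-- Move removing `(c,b)` and adding `(c+1,b-1)`, using partner `(c+1,b)`. -/
lemma moveB' (Q : Finset Pt) (c b : ℤ) (h1 : ((c, b) : Pt) ∈ Q)
    (h2 : ((c+1, b) : Pt) ∈ Q) (h3 : ((c+1, b-1) : Pt) ∉ Q) :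
    Move Q (insert ((c+1, b-1) : Pt) (Q.erase ((c, b) : Pt))) := by
  refine ⟨((c, b-1) : Pt), (0, 1), (1, 0), by simp [Tshape], by simp [Tshape],
    by simp [Prod.ext_iff], ?_, ?_, ?_, ?_⟩
  · show ((c+0, b-1+1) : Pt) ∈ Q
    convert h1 using 2 <;> ring
  · show ((c+1, b-1+0) : Pt) ∉ Q
    convert h3 using 2 <;> ring
  · rw [transl_tri]
    have e1 : ((c, (b-1)+1) : Pt) = (c, b) := by norm_num
    have e2 : ((c+1, (b-1)+1) : Pt) = (c+1, b) := by norm_num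
    rw [e1, e2]
    exact inter_two h1 h2 h3 (by simp [Prod.ext_iff])
  · have e2 : ((c, b-1) : Pt) + (0, 1) = (c, b) := by
      show ((c+0, b-1+1) : Pt) = _ ; norm_num
    have e3 : ((c, b-1) : Pt) + (1, 0) = (c+1, b-1) := by
      show ((c+1, b-1+0) : Pt) = _ ; norm_num
    rw [e2, e3, Finset.coe_insert, Finset.coe_erase]

lemma eqA_top (P : Finset Pt) (n : ℕ) (b : ℤ) :
    stateA P n b ((n:ℤ)-1) = stateS P n b := by
  ext ⟨x, y⟩
  by_cases hA : ((x, y) : Pt) ∈ P <;>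
    simp [stateA, stateS, mem_upSet, mem_rowSeg, hA] <;> omega

lemma eqA_step (P : Finset Pt) (n : ℕ) (b m : ℤ) (hm1 : (n:ℤ)-b ≤ m)
    (hm2 : m ≤ (n:ℤ)-1) :
    stateA P n b (m-1) = insert ((m, b-1) : Pt) ((stateA P n b m).erase ((m, b) : Pt)) := by
  ext ⟨x, y⟩
  by_cases hA : ((x, y) : Pt) ∈ P <;>
    simp [stateA, mem_upSet, mem_rowSeg, hA, Prod.ext_iff] <;> omega

lemma eqAB (P : Finset Pt) (n : ℕ) (b a₀ : ℤ) :
    stateA P n b a₀ = stateB P n b a₀ ((n:ℤ)-1-b) := by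
  ext ⟨x, y⟩
  by_cases hA : ((x, y) : Pt) ∈ P <;>
    simp [stateA, stateB, mem_upSet, mem_rowSeg, hA] <;> omega

lemma eqB_step (P : Finset Pt) (n : ℕ) (b a₀ l : ℤ) (hl1 : (n:ℤ)-1-b ≤ l)
    (hl2 : l + 1 ≤ a₀) :
    stateB P n b a₀ (l+1) = insert ((l+1, b-1) : Pt) ((stateB P n b a₀ l).erase ((l, b) : Pt)) := by
  ext ⟨x, y⟩
  by_cases hA : ((x, y) : Pt) ∈ P <;>
    simp [stateB, mem_upSet, mem_rowSeg, hA, Prod.ext_iff] <;> omega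

lemma eqB_bot (P : Finset Pt) (n : ℕ) (b a₀ : ℤ) (hb1 : 1 ≤ b) (hb2 : b ≤ (n:ℤ)-1)
    (ha1 : (n:ℤ)-1-b ≤ a₀) (ha2 : a₀ ≤ (n:ℤ)-1)
    (hmem : ((a₀, b) : Pt) ∈ P) (huniq : ∀ x : ℤ, ((x, b) : Pt) ∈ P → x = a₀) :
    stateB P n b a₀ a₀ = stateS P n (b-1) := by
  ext ⟨x, y⟩
  by_cases hA : ((x, y) : Pt) ∈ P
  · have himp : y = b → x = a₀ := fun h => huniq x (h ▸ hA)
    simp [stateB, stateS, mem_upSet, mem_rowSeg, hA]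
    omega
  · have hne : ¬(x = a₀ ∧ y = b) := by
      rintro ⟨rfl, rfl⟩; exact hA hmem
    simp [stateB, stateS, mem_upSet, mem_rowSeg, hA]
    omega

lemma chainA (P : Finset Pt) (n : ℕ) (b a₀ : ℤ) (hb1 : 1 ≤ b) (hb2 : b ≤ (n:ℤ)-1)
    (ha1 : (n:ℤ)-1-b ≤ a₀) (ha2 : a₀ ≤ (n:ℤ)-1) :
    ∀ j : ℕ, (j:ℤ) ≤ (n:ℤ)-1-a₀ →
      Relation.ReflTransGen Move (stateS P n b) (stateA P n b ((n:ℤ)-1-(j:ℤ))) := by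
  intro j
  induction j with
  | zero =>
    intro _
    have : (n:ℤ)-1-((0:ℕ):ℤ) = (n:ℤ)-1 := by push_cast; ring
    rw [this, eqA_top]
  | succ j ih =>
    intro hj
    push_cast at hj
    set m : ℤ := (n:ℤ)-1-(j:ℤ) with hm
    have h1 : ((m-1, b) : Pt) ∈ stateA P n b m := by
      simp [stateA, mem_upSet, mem_rowSeg]; omega
    have h2 : ((m, b) : Pt) ∈ stateA P n b m := by
      simp [stateA, mem_upSet, mem_rowSeg]; omega
    have h3 : ((m, b-1) : Pt) ∉ stateA P n b m := by
      by_cases hA : ((m, b-1) : Pt) ∈ P <;>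
        simp [stateA, mem_upSet, mem_rowSeg, hA] <;> omega
    have hmv := moveA _ _ _ h1 h2 h3
    have heq : stateA P n b ((n:ℤ)-1-((j:ℤ)+1)) =
        insert ((m, b-1) : Pt) ((stateA P n b m).erase ((m, b) : Pt)) := by
      rw [show (n:ℤ)-1-((j:ℤ)+1) = m - 1 by rw [hm]; ring]
      exact eqA_step P n b m (by omega) (by omega)
    have := Relation.ReflTransGen.tail (ih (by omega)) (heq ▸ hmv)
    rw [show (((j+1:ℕ)):ℤ) = (j:ℤ)+1 from by push_cast; ring]
    exact this

lemma chainB (P : Finset Pt) (n : ℕ) (b a₀ : ℤ) (hb1 : 1 ≤ b) (hb2 : b ≤ (n:ℤ)-1)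
    (ha1 : (n:ℤ)-1-b ≤ a₀) (ha2 : a₀ ≤ (n:ℤ)-1) :
    ∀ j : ℕ, (j:ℤ) ≤ a₀-((n:ℤ)-1-b) →
      Relation.ReflTransGen Move (stateA P n b a₀) (stateB P n b a₀ ((n:ℤ)-1-b+(j:ℤ))) := by
  intro j
  induction j with
  | zero =>
    intro _
    have : (n:ℤ)-1-b+((0:ℕ):ℤ) = (n:ℤ)-1-b := by push_cast; ring
    rw [this, ← eqAB]
  | succ j ih =>
    intro hj
    push_cast at hj
    set l : ℤ := (n:ℤ)-1-b+(j:ℤ) with hl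
    have h1 : ((l, b) : Pt) ∈ stateB P n b a₀ l := by
      simp [stateB, mem_upSet, mem_rowSeg]; omega
    have h2 : ((l+1, b) : Pt) ∈ stateB P n b a₀ l := by
      simp [stateB, mem_upSet, mem_rowSeg]; omega
    have h3 : ((l+1, b-1) : Pt) ∉ stateB P n b a₀ l := by
      by_cases hA : ((l+1, b-1) : Pt) ∈ P <;>
        simp [stateB, mem_upSet, mem_rowSeg, hA] <;> omega
    have hmv := moveB' _ _ _ h1 h2 h3
    have heq : stateB P n b a₀ ((n:ℤ)-1-b+((j:ℤ)+1)) =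
        insert ((l+1, b-1) : Pt) ((stateB P n b a₀ l).erase ((l, b) : Pt)) := by
      rw [show (n:ℤ)-1-b+((j:ℤ)+1) = l + 1 by rw [hl]; ring]
      exact eqB_step P n b a₀ l (by omega) (by omega)
    have := Relation.ReflTransGen.tail (ih (by omega)) (heq ▸ hmv)
    rw [show (((j+1:ℕ)):ℤ) = (j:ℤ)+1 from by push_cast; ring]
    exact this

lemma step_down (P : Finset Pt) (n : ℕ)
    (hP : (P : Set Pt) ⊆ triangle n)
    (hrow : ∀ b : ℤ, 0 ≤ b → b < (n : ℤ) → ∃! a : ℤ, ((a, b) : Pt) ∈ P)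
    (b : ℤ) (hb1 : 1 ≤ b) (hb2 : b ≤ (n:ℤ)-1) :
    Relation.ReflTransGen Move (stateS P n b) (stateS P n (b-1)) := by
  obtain ⟨a₀, ha₀, huniq⟩ := hrow b (by omega) (by omega)
  have hbd := hP ha₀
  simp only [triangle, Set.mem_setOf_eq] at hbd
  have ha1 : (n:ℤ)-1-b ≤ a₀ := by omega
  have ha2 : a₀ ≤ (n:ℤ)-1 := by omega
  have c1 := chainA P n b a₀ hb1 hb2 ha1 ha2 ((n:ℤ)-1-a₀).toNat
    (by rw [Int.toNat_of_nonneg (by omega)])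
  rw [Int.toNat_of_nonneg (by omega), show (n:ℤ)-1-((n:ℤ)-1-a₀) = a₀ by ring] at c1
  have c2 := chainB P n b a₀ hb1 hb2 ha1 ha2 (a₀-((n:ℤ)-1-b)).toNat
    (by rw [Int.toNat_of_nonneg (by omega)])
  rw [Int.toNat_of_nonneg (by omega),
    show (n:ℤ)-1-b+(a₀-((n:ℤ)-1-b)) = a₀ by ring] at c2
  have c3 : stateB P n b a₀ a₀ = stateS P n (b-1) :=
    eqB_bot P n b a₀ hb1 hb2 ha1 ha2 ha₀ huniq
  exact c1.trans (c3 ▸ c2)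

lemma mem_lineF {n : ℕ} {x y : ℤ} :
    ((x, y) : Pt) ∈ lineF n ↔ 0 ≤ x ∧ x ≤ (n:ℤ)-1 ∧ y = (n:ℤ)-1 := by
  simp only [lineF, Finset.mem_image, Finset.mem_range, Prod.mk.injEq]
  constructor
  · rintro ⟨a, ha, rfl, rfl⟩
    refine ⟨by positivity, by omega, rfl⟩
  · rintro ⟨h1, h2, rfl⟩
    exact ⟨x.toNat, by omega, by omega, rfl⟩

lemma stateS_top (P : Finset Pt) (n : ℕ) (hP : (P : Set Pt) ⊆ triangle n) :
    stateS P n ((n:ℤ)-1) = lineF n := by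
  ext ⟨x, y⟩
  by_cases hA : ((x, y) : Pt) ∈ P
  · have hbd := hP hA
    simp only [triangle, Set.mem_setOf_eq] at hbd
    simp [stateS, mem_upSet, mem_rowSeg, mem_lineF, hA]
    omega
  · simp [stateS, mem_upSet, mem_rowSeg, mem_lineF, hA]

lemma stateS_bot (P : Finset Pt) (n : ℕ) (hn : 1 ≤ n)
    (hP : (P : Set Pt) ⊆ triangle n)
    (hrow : ∀ b : ℤ, 0 ≤ b → b < (n : ℤ) → ∃! a : ℤ, ((a, b) : Pt) ∈ P) :
    stateS P n 0 = P := by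
  obtain ⟨a₀, ha₀, huniq⟩ := hrow 0 le_rfl (by exact_mod_cast hn)
  have hbd := hP ha₀
  simp only [triangle, Set.mem_setOf_eq] at hbd
  have ha0 : a₀ = (n:ℤ)-1 := by omega
  subst ha0
  ext ⟨x, y⟩
  by_cases hA : ((x, y) : Pt) ∈ P
  · have hbd2 := hP hA
    simp only [triangle, Set.mem_setOf_eq] at hbd2
    have himp : y = 0 → x = (n:ℤ)-1 := fun h => huniq x (h ▸ hA)
    simp [stateS, mem_upSet, mem_rowSeg, hA]
    omega
  · have hne : ¬(x = (n:ℤ)-1 ∧ y = 0) := by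
      rintro ⟨rfl, rfl⟩; exact hA ha₀
    simp [stateS, mem_upSet, mem_rowSeg, hA]
    omega

theorem row_transversal_fills' (n : ℕ) (hn : 1 ≤ n) (P : Finset Pt)
    (hP : (P : Set Pt) ⊆ triangle n)
    (hrow : ∀ b : ℤ, 0 ≤ b → b < (n : ℤ) → ∃! a : ℤ, ((a, b) : Pt) ∈ P) :
    fill (P : Set Pt) = triangle n ∧ InOrbit (lineF n) P := by
  refine ⟨fill_eq_triangle n hn P hP hrow, ?_⟩
  have desc : ∀ k : ℕ, (k:ℤ) ≤ (n:ℤ)-1 →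
      Relation.ReflTransGen Move (stateS P n ((n:ℤ)-1)) (stateS P n ((n:ℤ)-1-(k:ℤ))) := by
    intro k
    induction k with
    | zero =>
      intro _
      rw [show (n:ℤ)-1-((0:ℕ):ℤ) = (n:ℤ)-1 by push_cast; ring]
    | succ k ih =>
      intro hk
      push_cast at hk
      have step := step_down P n hP hrow ((n:ℤ)-1-(k:ℤ)) (by omega) (by omega)
      have := (ih (by omega)).trans step
      rw [show ((k+1:ℕ):ℤ) = (k:ℤ)+1 from by push_cast; ring,
        show (n:ℤ)-1-((k:ℤ)+1) = (n:ℤ)-1-(k:ℤ)-1 by ring]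
      exact this
  have final := desc (n-1) (by omega)
  rw [show (((n-1:ℕ)):ℤ) = (n:ℤ)-1 from by omega,
    show (n:ℤ)-1-((n:ℤ)-1) = 0 by ring] at final
  rw [stateS_top P n hP, stateS_bot P n hn hP hrow] at final
  exact final

/-- a transversal of the rows of `T_n` fills, hence lies in the
orbit of `L_n`. -/
theorem row_transversal_fills (n : ℕ) (hn : 1 ≤ n) (P : Finset Pt)
    (hP : (P : Set Pt) ⊆ triangle n)
    (hrow : ∀ b : ℤ, 0 ≤ b → b < (n : ℤ) → ∃! a : ℤ, ((a, b) : Pt) ∈ P) :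
    fill (P : Set Pt) = triangle n ∧ InOrbit (lineF n) P :=
  row_transversal_fills' n hn P hP hrow
end

section
/- The fill closure of an n-point pattern has at most n(n+1)/2 points: for any finite P ⊂ ℤ² with |P| = n, |φ(P)| ≤ n(n+1)/2. -/
open Set Relation

/-! ### Auxiliary development -/

section Aux

lemma mem_transl {v p : Pt} {S : Set Pt} : p ∈ transl v S ↔ p - v ∈ S := by
  constructor
  · rintro ⟨q, hq, rfl⟩; simpa using hq
  · intro h; exact ⟨p - v, h, by ring⟩

lemma mem_tri {v p : Pt} {k : ℕ} :
    p ∈ transl v (triangle k) ↔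
      v.1 ≤ p.1 ∧ p.1 < v.1 + k ∧ v.2 ≤ p.2 ∧ p.2 < v.2 + k ∧
        v.1 + v.2 + k - 1 ≤ p.1 + p.2 := by
  rw [mem_transl]
  simp only [triangle, Set.mem_setOf_eq, Prod.fst_sub, Prod.snd_sub]
  omega

lemma transl_Tshape (w : Pt) :
    transl w Tshape = {w + (0, 1), w + (1, 1), w + (1, 0)} := by
  simp [transl, Tshape, Set.image_insert_eq]

lemma transl_Tshape_finite (w : Pt) : (transl w Tshape).Finite := by
  rw [transl_Tshape]
  exact (Set.finite_singleton _).insert _ |>.insert _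

lemma tri_finite (k : ℕ) : (triangle k).Finite := by
  apply Set.Finite.subset (Set.finite_Icc ((0 : ℤ), (0 : ℤ)) ((k : ℤ) - 1, (k : ℤ) - 1))
  rintro ⟨x, y⟩ ⟨h1, h2, h3, h4, h5⟩
  simp only [Set.mem_Icc, Prod.mk_le_mk] at *
  omega

/-- `n(n+1)/2`. -/
def tnum (k : ℕ) : ℕ := k * (k + 1) / 2

lemma two_tnum (k : ℕ) : 2 * tnum k = k * (k + 1) :=
  Nat.mul_div_cancel' (Nat.even_mul_succ_self k).two_dvd

lemma tnum_add_le (a b : ℕ) : tnum a + tnum b ≤ tnum (a + b) := by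
  have ha := two_tnum a; have hb := two_tnum b; have hab := two_tnum (a + b)
  nlinarith [Nat.zero_le (a * b)]

lemma tnum_mono {a b : ℕ} (h : a ≤ b) : tnum a ≤ tnum b :=
  Nat.div_le_div_right (Nat.mul_le_mul h (by omega))

lemma ncard_triangle_le (k : ℕ) : (triangle k).ncard ≤ tnum k := by
  induction k with
  | zero =>
      have : triangle 0 = ∅ := by
        ext p; simp only [triangle, Set.mem_setOf_eq, Set.mem_empty_iff_false, iff_false]
        push_cast; omega
      simp [this]
  | succ k ih =>
      set D : Set Pt := (fun y : ℤ => ((k : ℤ) - y, y)) '' (Set.Icc (0 : ℤ) k) with hD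
      have hsub : triangle (k + 1) ⊆ transl (1, 1) (triangle k) ∪ D := by
        rintro ⟨x, y⟩ ⟨h1, h2, h3, h4, h5⟩
        push_cast at h2 h4 h5
        by_cases hxy : x + y = (k : ℤ)
        · right
          exact ⟨y, by simp only [Set.mem_Icc]; omega, by simp; omega⟩
        · left
          rw [mem_tri]
          push_cast
          omega
      have hDfin : D.Finite := (Set.finite_Icc _ _).image _
      have htfin : (transl (1, 1) (triangle k)).Finite := (tri_finite k).image _
      have hcard : (transl (1, 1) (triangle k)).ncard = (triangle k).ncard := by
        apply Set.ncard_image_of_injective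
        intro a b h; exact add_left_cancel h
      have hDcard : D.ncard ≤ k + 1 := by
        calc D.ncard ≤ (Set.Icc (0 : ℤ) k).ncard := Set.ncard_image_le (Set.finite_Icc _ _)
          _ = k + 1 := by
              rw [← Finset.coe_Icc, Set.ncard_coe_finset, Int.card_Icc]
              omega
      have := Set.ncard_le_ncard hsub (htfin.union hDfin)
      have hu := Set.ncard_union_le (transl (1, 1) (triangle k)) D
      have harith : tnum k + (k + 1) ≤ tnum (k + 1) := by
        have h1 := two_tnum k; have h2 := two_tnum (k + 1)
        have h3 : (k + 1) * (k + 1 + 1) = k * (k + 1) + 2 * (k + 1) := by ring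
        omega
      omega

/-- A translated triangle. -/
def Tri (c : Pt × ℕ) : Set Pt := transl c.1 (triangle c.2)

lemma tri_finite' (c : Pt × ℕ) : (Tri c).Finite := (tri_finite c.2).image _

lemma ncard_Tri_le (c : Pt × ℕ) : (Tri c).ncard ≤ tnum c.2 := by
  have : (Tri c).ncard = (triangle c.2).ncard :=
    Set.ncard_image_of_injective _ (fun a b h => add_left_cancel h)
  exact this ▸ ncard_triangle_le c.2

/-- Any translated triangle is a filled set. -/
lemma filled_Tri (c : Pt × ℕ) : Filled (Tri c) := by
  obtain ⟨v, k⟩ := c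
  intro w hw
  have hfin : (Tri (v, k) ∩ transl w Tshape).Finite :=
    (transl_Tshape_finite w).subset Set.inter_subset_right
  obtain ⟨x, ⟨hx1, hx2⟩, y, ⟨hy1, hy2⟩, hxy⟩ := (Set.one_lt_ncard hfin).1 hw
  rw [transl_Tshape] at hx2 hy2
  simp only [Set.mem_insert_iff, Set.mem_singleton_iff] at hx2 hy2
  have goal3 : w + (0, 1) ∈ Tri (v, k) ∧ w + (1, 1) ∈ Tri (v, k) ∧
      w + (1, 0) ∈ Tri (v, k) := by
    unfold Tri at *
    rcases hx2 with rfl | rfl | rfl <;> rcases hy2 with rfl | rfl | rfl <;>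
      first
        | exact absurd rfl hxy
        | (simp only [mem_tri, Prod.fst_add, Prod.snd_add, Prod.fst, Prod.snd] at hx1 hy1 ⊢
           refine ⟨?_, ?_, ?_⟩ <;> omega)
  rw [transl_Tshape]
  rintro p (rfl | rfl | rfl)
  exacts [goal3.1, goal3.2.1, goal3.2.2]

lemma touch_symm {A B : Set Pt} (h : Touch A B) : Touch B A := h.symm

/-- Points sharing a translate of the shape are at hex distance at most 1. -/
lemma close_of_shared {x y u : Pt} (hx : x ∈ transl u Tshape) (hy : y ∈ transl u Tshape) :
    x.1 - y.1 ≤ 1 ∧ y.1 - x.1 ≤ 1 ∧ x.2 - y.2 ≤ 1 ∧ y.2 - x.2 ≤ 1 ∧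
      x.1 + x.2 - y.1 - y.2 ≤ 1 ∧ y.1 + y.2 - x.1 - x.2 ≤ 1 := by
  rw [transl_Tshape] at hx hy
  simp only [Set.mem_insert_iff, Set.mem_singleton_iff] at hx hy
  rcases hx with rfl | rfl | rfl <;> rcases hy with rfl | rfl | rfl <;>
    simp only [Prod.fst_add, Prod.snd_add] <;>
    refine ⟨?_, ?_, ?_, ?_, ?_, ?_⟩ <;> simp <;> omega

/-- Two touching triangles fit inside a triangle whose side is the sum of sides. -/
lemma touch_merge {c d : Pt × ℕ} (h : Touch (Tri c) (Tri d)) :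
    ∃ v : Pt, Tri c ∪ Tri d ⊆ Tri (v, c.2 + d.2) := by
  -- extract close points a ∈ Tri c, b ∈ Tri d
  obtain ⟨a, ha, b, hb, hcl⟩ :
      ∃ a, a ∈ Tri c ∧ ∃ b, b ∈ Tri d ∧
        (a.1 - b.1 ≤ 1 ∧ b.1 - a.1 ≤ 1 ∧ a.2 - b.2 ≤ 1 ∧ b.2 - a.2 ≤ 1 ∧
          a.1 + a.2 - b.1 - b.2 ≤ 1 ∧ b.1 + b.2 - a.1 - a.2 ≤ 1) := by
    rcases h with ⟨p, hp1, hp2⟩ | ⟨p, hp1, hp2⟩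
    · simp only [nbrSet, Set.mem_iUnion, nbr, Set.mem_setOf_eq] at hp2
      obtain ⟨q, hq, hne, u, hqu, hpu⟩ := hp2
      obtain h6 := close_of_shared hpu hqu
      exact ⟨p, hp1, q, hq, h6⟩
    · simp only [nbrSet, Set.mem_iUnion, nbr, Set.mem_setOf_eq] at hp2
      obtain ⟨q, hq, hne, u, hqu, hpu⟩ := hp2
      obtain h6 := close_of_shared hqu hpu
      exact ⟨q, hq, p, hp1, h6⟩
  refine ⟨(max (c.1.1 + c.2 - 1) (d.1.1 + d.2 - 1) - (c.2 + d.2) + 1,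
           max (c.1.2 + c.2 - 1) (d.1.2 + d.2 - 1) - (c.2 + d.2) + 1), ?_⟩
  rw [Tri, mem_tri] at ha hb
  rintro p (hp | hp) <;> rw [Tri, mem_tri] at hp ⊢ <;>
    · simp only [Prod.fst, Prod.snd] at *
      push_cast at *
      omega

/-- The union of a list of translated triangles. -/
def unionT (L : List (Pt × ℕ)) : Set Pt := ⋃ c ∈ L, Tri c

/-- Total side length of a list of triangles. -/
def sumK (L : List (Pt × ℕ)) : ℕ := (L.map Prod.snd).sum

/-- Non-touching relation. -/
def NT (c d : Pt × ℕ) : Prop := ¬ Touch (Tri c) (Tri d)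

lemma NT_symm : Symmetric NT := fun _ _ h ht => h (touch_symm ht)

lemma mem_unionT {p : Pt} {L : List (Pt × ℕ)} :
    p ∈ unionT L ↔ ∃ c ∈ L, p ∈ Tri c := by
  simp [unionT]

lemma unionT_nil : unionT [] = ∅ := by simp [unionT]

lemma unionT_cons (x : Pt × ℕ) (l : List (Pt × ℕ)) :
    unionT (x :: l) = Tri x ∪ unionT l := by
  ext p
  simp only [mem_unionT, List.mem_cons, Set.mem_union]
  constructor
  · rintro ⟨c, (rfl | hc), hp⟩
    · exact Or.inl hp
    · exact Or.inr ⟨c, hc, hp⟩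
  · rintro (hp | ⟨c, hc, hp⟩)
    · exact ⟨x, Or.inl rfl, hp⟩
    · exact ⟨c, Or.inr hc, hp⟩

lemma unionT_perm {L L' : List (Pt × ℕ)} (h : L.Perm L') : unionT L = unionT L' := by
  ext p; simp only [mem_unionT]
  constructor <;> rintro ⟨c, hc, hp⟩
  · exact ⟨c, h.mem_iff.1 hc, hp⟩
  · exact ⟨c, h.mem_iff.2 hc, hp⟩

lemma sumK_perm {L L' : List (Pt × ℕ)} (h : L.Perm L') : sumK L = sumK L' :=
  (h.map Prod.snd).sum_eq

lemma sumK_cons (x : Pt × ℕ) (l : List (Pt × ℕ)) : sumK (x :: l) = x.2 + sumK l := by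
  simp [sumK]

lemma unionT_finite (L : List (Pt × ℕ)) : (unionT L).Finite := by
  induction L with
  | nil => simp [unionT_nil]
  | cons x l ih => rw [unionT_cons]; exact (tri_finite' x).union ih

lemma ncard_unionT_le (L : List (Pt × ℕ)) : (unionT L).ncard ≤ tnum (sumK L) := by
  induction L with
  | nil => simp [unionT_nil]
  | cons x l ih =>
      rw [unionT_cons, sumK_cons]
      calc (Tri x ∪ unionT l).ncard ≤ (Tri x).ncard + (unionT l).ncard :=
            Set.ncard_union_le _ _
        _ ≤ tnum x.2 + tnum (sumK l) := Nat.add_le_add (ncard_Tri_le x) ih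
        _ ≤ tnum (x.2 + sumK l) := tnum_add_le _ _

/-- The union of pairwise non-touching triangles is filled. -/
lemma filled_unionT {L : List (Pt × ℕ)} (hL : L.Pairwise NT) : Filled (unionT L) := by
  intro w hw
  have hfin : (unionT L ∩ transl w Tshape).Finite :=
    (transl_Tshape_finite w).subset Set.inter_subset_right
  obtain ⟨x, ⟨hx1, hx2⟩, y, ⟨hy1, hy2⟩, hxy⟩ := (Set.one_lt_ncard hfin).1 hw
  obtain ⟨c, hcL, hxc⟩ := mem_unionT.1 hx1
  obtain ⟨d, hdL, hyd⟩ := mem_unionT.1 hy1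
  by_cases hcd : c = d
  · subst hcd
    have h2 : 2 ≤ (Tri c ∩ transl w Tshape).ncard := by
      have hfin' : (Tri c ∩ transl w Tshape).Finite :=
        (transl_Tshape_finite w).subset Set.inter_subset_right
      exact (Set.one_lt_ncard hfin').2 ⟨x, ⟨hxc, hx2⟩, y, ⟨hyd, hy2⟩, hxy⟩
    intro p hp
    exact mem_unionT.2 ⟨c, hcL, filled_Tri c w h2 hp⟩
  · exfalso
    have : Std.Symm NT := ⟨fun _ _ h => NT_symm h⟩
    apply hL.forall hcL hdL hcd
    exact Or.inr ⟨y, hyd, Set.mem_biUnion hxc ⟨hxy.symm, w, hx2, hy2⟩⟩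

/-- Merging procedure: any list of triangles can be replaced by a pairwise
non-touching list covering it, without increasing the total side length. -/
lemma merge_all (n : ℕ) : ∀ L : List (Pt × ℕ), L.length ≤ n →
    ∃ L' : List (Pt × ℕ), L'.Pairwise NT ∧ unionT L ⊆ unionT L' ∧ sumK L' ≤ sumK L := by
  induction n with
  | zero =>
      intro L hL
      have : L = [] := List.length_eq_zero_iff.1 (Nat.le_zero.1 hL)
      subst this
      exact ⟨[], List.Pairwise.nil, subset_rfl, le_rfl⟩
  | succ n ih =>
      intro L hL
      by_cases hp : L.Pairwise NT
      · exact ⟨L, hp, subset_rfl, le_rfl⟩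
      · rw [List.pairwise_iff_forall_sublist] at hp
        push_neg at hp
        obtain ⟨c, d, hsub, htouch⟩ := hp
        rw [NT, not_not] at htouch
        obtain ⟨r, hperm⟩ := hsub.exists_perm_append
        have hperm : L.Perm (c :: d :: r) := hperm
        obtain ⟨v, hv⟩ := touch_merge htouch
        have hlen : L.length = r.length + 2 := by
          have := hperm.length_eq
          simp at this
          omega
        obtain ⟨L', h1, h2, h3⟩ := ih ((v, c.2 + d.2) :: r) (by simp; omega)
        refine ⟨L', h1, ?_, ?_⟩
        · rw [unionT_perm hperm, unionT_cons, unionT_cons]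
          refine subset_trans ?_ h2
          rw [unionT_cons]
          intro p hp
          rcases hp with hp | hp | hp
          · exact Or.inl (hv (Or.inl hp))
          · exact Or.inl (hv (Or.inr hp))
          · exact Or.inr hp
        · rw [sumK_perm hperm, sumK_cons, sumK_cons]
          rw [sumK_cons] at h3
          omega

/-- Any finite pattern is covered by a list of triangles of total side `≤ card`. -/
lemma cover (P : Finset Pt) :
    ∃ L : List (Pt × ℕ), (P : Set Pt) ⊆ unionT L ∧ sumK L ≤ P.card := by
  classical
  induction P using Finset.induction_on with
  | empty => exact ⟨[], by simp, by simp [sumK]⟩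
  | insert p s hps ih =>
      obtain ⟨L, h1, h2⟩ := ih
      refine ⟨(p, 1) :: L, ?_, ?_⟩
      · intro q hq
        rcases Finset.mem_insert.1 (by exact_mod_cast hq) with rfl | hq'
        · rw [unionT_cons]
          left
          rw [Tri, mem_tri]
          push_cast
          omega
        · rw [unionT_cons]
          exact Or.inr (h1 (by exact_mod_cast hq'))
      · rw [sumK_cons, Finset.card_insert_of_notMem hps]
        omega

end Aux

/-- the fill closure of an `n`-point pattern is finite with at
most `n(n+1)/2` points. -/
theorem fill_card_bound (P : Finset Pt) :
    (fill (P : Set Pt)).Finite ∧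
      (fill (P : Set Pt)).ncard ≤ P.card * (P.card + 1) / 2 := by
  obtain ⟨L, hcov, hsum⟩ := cover P
  obtain ⟨L', hpw, hsub, hsum'⟩ := merge_all L.length L le_rfl
  have hPF : (P : Set Pt) ⊆ unionT L' := hcov.trans hsub
  have hfill : fill (P : Set Pt) ⊆ unionT L' := by
    intro p hp
    exact Set.mem_sInter.1 hp (unionT L') ⟨hPF, filled_unionT hpw⟩
  have hfin := (unionT_finite L').subset hfill
  refine ⟨hfin, ?_⟩
  calc (fill (P : Set Pt)).ncard ≤ (unionT L').ncard :=
        Set.ncard_le_ncard hfill (unionT_finite L')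
    _ ≤ tnum (sumK L') := ncard_unionT_le L'
    _ ≤ tnum P.card := tnum_mono (hsum'.trans hsum)
    _ = P.card * (P.card + 1) / 2 := rfl
end
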